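/- arXiv:1811.06592 — 5 statements merged into one kernel-verified Lean document; each statement's English description precedes it below -/
import Mathlib

section
/- For all integers i ≥ j ≥ 0, every real α, and every real x, the generalized Laguerre polynomials satisfy the inversion formula Σ_{k=j}^{i} L_{i−k}^{(−α−i−1)}(−x) · L_{k−j}^{(α+j)}(x) = δ_{i,j}, where δ_{i,j} is the Kronecker delta. -/
open scoped BigOperators
open Matrix MeasureTheory

noncomputable section

/-- Pochhammer symbol `(a)_m = a(a+1)⋯(a+m-1)`. -/
def poch (a : ℝ) (m : ℕ) : ℝ := ∏ i ∈ Finset.range m, (a + i)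

/-- Generalized Laguerre polynomial `L_n^{(α)}(x)`. -/
def lagP (α : ℝ) (n : ℕ) (x : ℝ) : ℝ :=
  ∑ k ∈ Finset.range (n + 1),
    (-1 : ℝ) ^ k * poch (α + k + 1) (n - k) * x ^ k / ((n - k).factorial * k.factorial)

/-- The matrix `L_μ^{(α)}(x)`; the 0-based index pair `(i,j)` corresponds to the
1-based index pair `(i+1, j+1)` of the paper. -/
def LagMat (N : ℕ) (μ : Fin N → ℝ) (α : ℝ) (x : ℝ) : Matrix (Fin N) (Fin N) ℝ :=
  Matrix.of fun m n : Fin N =>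
    if (n : ℕ) ≤ (m : ℕ) then μ m / μ n * lagP (α + (n : ℕ) + 1) ((m : ℕ) - (n : ℕ)) x else 0

/-- The matrix `A_μ = S_μ A S_μ⁻¹`, written entrywise. -/
def AmuMat (N : ℕ) (μ : Fin N → ℝ) : Matrix (Fin N) (Fin N) ℝ :=
  Matrix.of fun i j : Fin N => if (i : ℕ) = (j : ℕ) + 1 then -(μ i / μ j) else 0

/-- `J = diag(1,…,N)`. -/
def Jmat (N : ℕ) : Matrix (Fin N) (Fin N) ℝ :=
  Matrix.diagonal fun i => ((i : ℕ) + 1 : ℝ)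

/-- `T^{(ν)}(x) = e^{-x} Σ_k δ_k x^{ν+k} E_{k,k}`. -/
def Tmat (N : ℕ) (δ : Fin N → ℝ) (ν : ℝ) (x : ℝ) : Matrix (Fin N) (Fin N) ℝ :=
  Matrix.diagonal fun k => Real.exp (-x) * δ k * x ^ (ν + (k : ℕ) + 1)

/-- The weight `W_μ^{(α,ν)}(x) = L_μ^{(α)}(x) T^{(ν)}(x) L_μ^{(α)}(x)^*`. -/
def Wmat (N : ℕ) (μ δ : Fin N → ℝ) (α ν : ℝ) (x : ℝ) : Matrix (Fin N) (Fin N) ℝ :=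
  LagMat N μ α x * Tmat N δ ν x * (LagMat N μ α x)ᵀ

/-- Entrywise evaluation of a matrix of polynomials. -/
def matPolyEval {N : ℕ} (P : Matrix (Fin N) (Fin N) (Polynomial ℝ)) (x : ℝ) :
    Matrix (Fin N) (Fin N) ℝ :=
  Matrix.of fun i j => (P i j).eval x

/-- Entrywise derivative of a matrix of polynomials. -/
def matPolyDeriv {N : ℕ} (P : Matrix (Fin N) (Fin N) (Polynomial ℝ)) :
    Matrix (Fin N) (Fin N) (Polynomial ℝ) :=
  Matrix.of fun i j => Polynomial.derivative (P i j)

/-- `P` is the monic (matrix valued) orthogonal polynomial of degree `n` w.r.t. the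
weight `W` on `(0,∞)`. -/
def MonicOrth (N : ℕ) (W : ℝ → Matrix (Fin N) (Fin N) ℝ) (n : ℕ)
    (P : Matrix (Fin N) (Fin N) (Polynomial ℝ)) : Prop :=
  (∀ i j, (P i j).degree ≤ n) ∧
  Matrix.of (fun i j => (P i j).coeff n) = (1 : Matrix (Fin N) (Fin N) ℝ) ∧
  ∀ k, k < n → ∀ i j, (∫ x in Set.Ioi (0 : ℝ), (matPolyEval P x * W x) i j * x ^ k) = 0

/-- Conditions (C1) and (C2) at level `ν`, relating `δ = δ^{(ν)}`, `δ' = δ^{(ν+1)}`,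
`c = c^{(ν)}` and `d = d^{(ν)}`. -/
def PearsonCond (N : ℕ) (μ δ δ' : Fin N → ℝ) (c d : ℝ) : Prop :=
  0 < c ∧ 0 < d ∧
  (∀ k : Fin N, δ' k = (((k : ℕ) + 1) * d + c) * δ k) ∧
  ∀ (k : Fin N) (h : (k : ℕ) + 1 < N),
    μ ⟨(k : ℕ) + 1, h⟩ ^ 2 / μ k ^ 2 =
      d * ((k : ℕ) + 1) * ((N : ℝ) - ((k : ℕ) + 1)) * δ ⟨(k : ℕ) + 1, h⟩ / δ' k

/-- `Φ^{(α,ν)}(x)` (with `c = c^{(ν)}`, `d = d^{(ν)}`). -/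
def PhiMat (N : ℕ) (μ : Fin N → ℝ) (α c d : ℝ) (x : ℝ) : Matrix (Fin N) (Fin N) ℝ :=
  ((LagMat N μ α 0)ᵀ)⁻¹ *
    (-(d * x ^ 2) • (AmuMat N μ)ᵀ + x • (d • Jmat N + c • (1 : Matrix (Fin N) (Fin N) ℝ))) *
    (LagMat N μ α 0)ᵀ

/-- `Ψ^{(α,ν)}(x)` (with `δ = δ^{(ν)}`, `δ' = δ^{(ν+1)}`, `c = c^{(ν)}`, `d = d^{(ν)}`). -/
def PsiMat (N : ℕ) (μ δ δ' : Fin N → ℝ) (α ν c d : ℝ) (x : ℝ) : Matrix (Fin N) (Fin N) ℝ :=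
  ((LagMat N μ α 0)ᵀ)⁻¹ *
    (x • (d • (Jmat N - (AmuMat N μ)ᵀ * (Jmat N + (ν + 1) • (1 : Matrix (Fin N) (Fin N) ℝ)) -
        ((N : ℝ) + 1) • (1 : Matrix (Fin N) (Fin N) ℝ)) - c • (1 : Matrix (Fin N) (Fin N) ℝ)) +
      (Jmat N + (ν + 1) • (1 : Matrix (Fin N) (Fin N) ℝ)) *
        (d • Jmat N + c • (1 : Matrix (Fin N) (Fin N) ℝ)) +
      (Matrix.diagonal δ)⁻¹ * AmuMat N μ * Matrix.diagonal δ') *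
    (LagMat N μ α 0)ᵀ

/-- `K_n^{(β,ν)}` (with `c = c^{(ν)}`, `d = d^{(ν)}`). -/
def Kmat (N : ℕ) (μ : Fin N → ℝ) (β ν c d : ℝ) (n : ℕ) : Matrix (Fin N) (Fin N) ℝ :=
  LagMat N μ β 0 *
    (d • (Jmat N - (Jmat N + (ν + n) • (1 : Matrix (Fin N) (Fin N) ℝ)) * AmuMat N μ -
      ((N : ℝ) + 1) • (1 : Matrix (Fin N) (Fin N) ℝ)) - c • (1 : Matrix (Fin N) (Fin N) ℝ)) *
    (LagMat N μ β 0)⁻¹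

/-- `(Q D^{(α,ν)})(x)` for a matrix valued polynomial `Q`. -/
def Dapply (N : ℕ) (μ : Fin N → ℝ) (α ν : ℝ)
    (Q : Matrix (Fin N) (Fin N) (Polynomial ℝ)) (x : ℝ) : Matrix (Fin N) (Fin N) ℝ :=
  x • matPolyEval (matPolyDeriv (matPolyDeriv Q)) x +
    matPolyEval (matPolyDeriv Q) x *
      ((-x) • (AmuMat N μ + 1)⁻¹ + (ν + 1) • (1 : Matrix (Fin N) (Fin N) ℝ) + Jmat N +
        (α • (1 : Matrix (Fin N) (Fin N) ℝ) + Jmat N) * AmuMat N μ) +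
    matPolyEval Q x * ((α - ν) • (AmuMat N μ + 1)⁻¹ - Jmat N)

lemma poch_eq (a : ℝ) (m : ℕ) : poch a m = (ascPochhammer ℝ m).eval a := by
  induction m with
  | zero => simp [poch]
  | succ n ih => rw [poch, Finset.prod_range_succ, ← poch, ih, ascPochhammer_succ_eval]

lemma desc_smeval (u : ℝ) (k : ℕ) :
    (descPochhammer ℤ k).smeval u = (-1 : ℝ)^k * poch (-u) k := by
  have h := Polynomial.ascPochhammer_smeval_neg_eq_descPochhammer u k
  have h2 : (ascPochhammer ℕ k).smeval (-u) = poch (-u) k := by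
    rw [Polynomial.ascPochhammer_smeval_eq_eval, poch_eq]
  rw [h2] at h
  rw [Units.smul_def, Int.coe_negOnePow_natCast, zsmul_eq_mul] at h
  push_cast at h
  have := congrArg (fun z => (-1 : ℝ)^k * z) h.symm
  simpa [← mul_assoc, ← pow_add, pow_mul, neg_one_sq] using this

lemma poch_vdm (u v : ℝ) (w : ℕ) :
    ∑ p ∈ Finset.HasAntidiagonal.antidiagonal w, (w.choose p.1 : ℝ) * (poch u p.1 * poch v p.2)
      = poch (u + v) w := by
  have h := Ring.descPochhammer_smeval_add (R := ℝ) (r := -u) (s := -v) w (Commute.all _ _)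
  rw [show -u + -v = -(u+v) by ring] at h
  rw [desc_smeval] at h
  simp only [desc_smeval, neg_neg] at h
  have hw : ∀ p ∈ Finset.HasAntidiagonal.antidiagonal w,
      (w.choose p.1 : ℝ) * ((-1:ℝ)^p.1 * poch u p.1 * ((-1:ℝ)^p.2 * poch v p.2))
        = (-1:ℝ)^w * ((w.choose p.1 : ℝ) * (poch u p.1 * poch v p.2)) := by
    intro p hp
    rw [Finset.HasAntidiagonal.mem_antidiagonal] at hp
    rw [← hp, pow_add]; ring
  rw [Finset.sum_congr rfl hw, ← Finset.mul_sum] at h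
  have hne : ((-1:ℝ)^w) ≠ 0 := by positivity
  field_simp at h
  rw [h]; exact Finset.sum_congr rfl (fun p _ => by ring)

lemma lagP_antidiag (A : ℝ) (n : ℕ) (x : ℝ) :
    lagP A n x = ∑ p ∈ Finset.HasAntidiagonal.antidiagonal n,
      (-1:ℝ)^p.1 * poch (A+p.1+1) p.2 * x^p.1 / (p.2.factorial * p.1.factorial) := by
  rw [lagP, Finset.Nat.sum_antidiagonal_eq_sum_range_succ_mk]

lemma fact_split (a b : ℕ) :
    ((a+b).choose a : ℝ) / ((a+b).factorial : ℝ) = 1 / ((a.factorial : ℝ) * (b.factorial : ℝ)) := by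
  have h : (((a+b).choose a : ℕ) * a.factorial * b.factorial : ℝ) = ((a+b).factorial : ℝ) := by
    rw [Nat.choose_symm_add]
    exact_mod_cast Nat.add_choose_mul_factorial_mul_factorial a b
  have ha : (a.factorial : ℝ) ≠ 0 := Nat.cast_ne_zero.mpr (Nat.factorial_ne_zero a)
  have hb : (b.factorial : ℝ) ≠ 0 := Nat.cast_ne_zero.mpr (Nat.factorial_ne_zero b)
  rw [← h]
  have hc : ((a+b).choose a : ℝ) ≠ 0 :=
    Nat.cast_ne_zero.mpr (Nat.choose_pos (Nat.le_add_right a b)).ne'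
  field_simp

lemma regroup (f : ℕ → ℕ → ℕ → ℕ → ℝ) (m : ℕ) :
    (∑ q ∈ Finset.HasAntidiagonal.antidiagonal m, ∑ i ∈ Finset.HasAntidiagonal.antidiagonal q.2, ∑ j ∈ Finset.HasAntidiagonal.antidiagonal q.1,
      f i.1 i.2 j.1 j.2)
    = ∑ q ∈ Finset.HasAntidiagonal.antidiagonal m, ∑ i ∈ Finset.HasAntidiagonal.antidiagonal q.1, ∑ j ∈ Finset.HasAntidiagonal.antidiagonal q.2,
      f i.1 j.1 i.2 j.2 := by
  rw [Finset.sum_sigma', Finset.sum_sigma', Finset.sum_sigma', Finset.sum_sigma']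
  refine Finset.sum_nbij'
    (i := fun e => ⟨⟨(e.1.2.1 + e.2.1, e.1.2.2 + e.2.2), (e.1.2.1, e.2.1)⟩, (e.1.2.2, e.2.2)⟩)
    (j := fun e => ⟨⟨(e.1.2.2 + e.2.2, e.1.2.1 + e.2.1), (e.1.2.1, e.2.1)⟩, (e.1.2.2, e.2.2)⟩)
    ?_ ?_ ?_ ?_ ?_
  · rintro ⟨⟨⟨t,u⟩,⟨a,r⟩⟩,⟨b,s⟩⟩ he
    simp only [Finset.mem_sigma, Finset.HasAntidiagonal.mem_antidiagonal] at he ⊢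
    exact ⟨⟨by omega, trivial⟩, trivial⟩
  · rintro ⟨⟨⟨c,w⟩,⟨a,b⟩⟩,⟨r,s⟩⟩ he
    simp only [Finset.mem_sigma, Finset.HasAntidiagonal.mem_antidiagonal] at he ⊢
    exact ⟨⟨by omega, trivial⟩, trivial⟩
  · rintro ⟨⟨⟨t,u⟩,⟨a,r⟩⟩,⟨b,s⟩⟩ he
    simp only [Finset.mem_sigma, Finset.HasAntidiagonal.mem_antidiagonal] at he
    simp only [Sigma.ext_iff, Prod.mk.injEq, heq_eq_eq]
    exact ⟨⟨⟨by omega, by omega⟩, trivial⟩, trivial⟩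
  · rintro ⟨⟨⟨c,w⟩,⟨a,b⟩⟩,⟨r,s⟩⟩ he
    simp only [Finset.mem_sigma, Finset.HasAntidiagonal.mem_antidiagonal] at he
    simp only [Sigma.ext_iff, Prod.mk.injEq, heq_eq_eq]
    exact ⟨⟨⟨by omega, by omega⟩, trivial⟩, trivial⟩
  · rintro ⟨⟨⟨t,u⟩,⟨a,r⟩⟩,⟨b,s⟩⟩ he
    rfl

lemma lagP_conv (A B x y : ℝ) (m : ℕ) :
    ∑ q ∈ Finset.HasAntidiagonal.antidiagonal m, lagP A q.2 x * lagP B q.1 y = lagP (A + B + 1) m (x + y) := by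
  have key : ∀ q ∈ Finset.HasAntidiagonal.antidiagonal m,
      (-1:ℝ)^q.1 * poch (A+B+1+q.1+1) q.2 * (x+y)^q.1 / ((q.2.factorial : ℝ) * (q.1.factorial : ℝ))
      = ∑ i ∈ Finset.HasAntidiagonal.antidiagonal q.1, ∑ j ∈ Finset.HasAntidiagonal.antidiagonal q.2,
          (-1:ℝ)^q.1 * (poch (A+i.1+1) j.1 * poch (B+i.2+1) j.2) *
            (x^i.1 * y^i.2) *
            ((q.2.choose j.1 : ℝ) / (q.2.factorial : ℝ)) *
            ((q.1.choose i.1 : ℝ) / (q.1.factorial : ℝ)) := by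
    intro q hq
    have hx : (x+y)^q.1 = ∑ p ∈ Finset.HasAntidiagonal.antidiagonal q.1,
        (q.1.choose p.1 : ℝ) * (x^p.1 * y^p.2) := by
      rw [Finset.Nat.sum_antidiagonal_eq_sum_range_succ_mk, add_pow]
      exact Finset.sum_congr rfl (fun k hk => by ring)
    rw [hx, Finset.mul_sum, Finset.sum_div]
    refine Finset.sum_congr rfl (fun p hp => ?_)
    rw [Finset.HasAntidiagonal.mem_antidiagonal] at hp
    have hpoch : poch (A+B+1+q.1+1) q.2
        = ∑ z ∈ Finset.HasAntidiagonal.antidiagonal q.2,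
            (q.2.choose z.1 : ℝ) * (poch (A+p.1+1) z.1 * poch (B+p.2+1) z.2) := by
      rw [show A+B+1+(q.1:ℝ)+1 = (A+(p.1:ℝ)+1)+(B+(p.2:ℝ)+1) by push_cast [← hp]; ring,
        ← poch_vdm]
    rw [hpoch, Finset.mul_sum, Finset.sum_mul, Finset.sum_div]
    exact Finset.sum_congr rfl (fun z hz => by ring)
  rw [lagP_antidiag (A+B+1) m (x+y), Finset.sum_congr rfl key]
  simp only [lagP_antidiag, Finset.sum_mul_sum]
  refine (Finset.sum_congr rfl fun q _ => Finset.sum_congr rfl fun i _ =>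
      Finset.sum_congr rfl fun j _ => ?_).trans
    ((regroup (fun a r b s => (-1:ℝ)^(a+b) * (poch (A+a+1) r * poch (B+b+1) s) *
        (x^a * y^b) * (((r+s).choose r : ℝ) / ((r+s).factorial : ℝ)) *
        (((a+b).choose a : ℝ) / ((a+b).factorial : ℝ))) m).trans
      (Finset.sum_congr rfl fun q hq => Finset.sum_congr rfl fun i hi =>
        Finset.sum_congr rfl fun j hj => ?_))
  · rw [fact_split, fact_split]
    ring
  · rw [Finset.HasAntidiagonal.mem_antidiagonal] at hi hj
    rw [show q.1 = i.1 + i.2 from hi.symm, show q.2 = j.1 + j.2 from hj.symm]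

lemma lagP_zero (γ : ℝ) (n : ℕ) : lagP γ n 0 = poch (γ+1) n / n.factorial := by
  rw [lagP, Finset.sum_eq_single 0]
  · simp
  · intro k _ hk
    simp [zero_pow hk]
  · intro h
    simp at h

lemma lagP_neg_self (m : ℕ) : lagP (-(m:ℝ)) m 0 = if m = 0 then 1 else 0 := by
  rw [lagP_zero]
  cases m with
  | zero => simp [poch]
  | succ n =>
    simp only [Nat.succ_ne_zero, if_neg, reduceIte]
    rw [poch, Finset.prod_eq_zero (Finset.mem_range.mpr (Nat.lt_succ_self n)), zero_div]
    push_cast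
    ring


/-- the inversion formula for generalized Laguerre polynomials. -/
theorem laguerre_inversion (i j : ℕ) (hij : j ≤ i) (α x : ℝ) :
    ∑ k ∈ Finset.Icc j i, lagP (-α - i - 1) (i - k) (-x) * lagP (α + j) (k - j) x
      = if i = j then 1 else 0 := by
  set m := i - j with hm
  have h1 : ∑ k ∈ Finset.Icc j i, lagP (-α - i - 1) (i - k) (-x) * lagP (α + j) (k - j) x
      = ∑ t ∈ Finset.range (m + 1), lagP (-α - i - 1) (m - t) (-x) * lagP (α + j) t x := by
    rw [← Finset.Ico_add_one_right_eq_Icc, Finset.sum_Ico_eq_sum_range]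
    have : i + 1 - j = m + 1 := by omega
    rw [this]
    refine Finset.sum_congr rfl (fun t ht => ?_)
    rw [Finset.mem_range] at ht
    congr 2 <;> omega
  rw [h1, ← Finset.Nat.sum_antidiagonal_eq_sum_range_succ_mk
    (fun q => lagP (-α - i - 1) q.2 (-x) * lagP (α + j) q.1 x), lagP_conv]
  have h2 : -α - i - 1 + (α + j) + 1 = -(m:ℝ) := by
    have : (m:ℝ) = (i:ℝ) - (j:ℝ) := by rw [hm]; push_cast [Nat.cast_sub hij]; ring
    rw [this]; ring
  rw [h2, neg_add_cancel, lagP_neg_self]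
  have : i = j ↔ m = 0 := by omega
  simp [this]
end
end

section
/- Let M(x) be the N×N lower-triangular matrix with entries M(x)_{m,n} = (μ_m/μ_n) L_{m−n}^{(−α−m−1)}(−x) for m ≥ n and 0 for m < n. Then for every real x, M(x) · L_μ^{(α)}(x) = I and L_μ^{(α)}(x) · M(x) = I; that is, M(x) = (L_μ^{(α)}(x))^{−1}. -/
open scoped BigOperators
open Matrix MeasureTheory

noncomputable section

lemma poch_zero (a : ℝ) : poch a 0 = 1 := rfl
lemma poch_succ (a : ℝ) (m : ℕ) : poch a (m + 1) = poch a m * (a + m) :=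
  Finset.prod_range_succ _ _
lemma poch_succ_left (a : ℝ) (m : ℕ) : poch a (m + 1) = a * poch (a + 1) m := by
  induction m with
  | zero => simp [poch_succ, poch_zero]
  | succ n ih => rw [poch_succ, ih, poch_succ]; push_cast; ring

lemma vand (a b : ℝ) : ∀ q : ℕ,
    ∑ u ∈ Finset.range (q + 1), (q.choose u : ℝ) * (poch a u * poch b (q - u))
      = poch (a + b) q := by
  intro q
  induction q with
  | zero => simp [poch_zero]
  | succ q ih =>
    have h1 : ∑ u ∈ Finset.range (q + 2), ((q+1).choose u : ℝ) * (poch a u * poch b (q + 1 - u))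
        = (∑ i ∈ Finset.range (q + 1), (q.choose i : ℝ) * (poch a (i+1) * poch b (q - i)))
          + ∑ i ∈ Finset.range (q + 2), (q.choose i : ℝ) * (poch a i * poch b (q + 1 - i)) := by
      rw [Finset.sum_range_succ' (fun u => ((q+1).choose u : ℝ) * (poch a u * poch b (q + 1 - u)))]
      rw [Finset.sum_range_succ' (fun i => (q.choose i : ℝ) * (poch a i * poch b (q + 1 - i)))]
      simp only [Nat.choose_succ_succ]
      push_cast
      simp [add_mul, Finset.sum_add_distrib, add_assoc]
    have h2 : ∑ i ∈ Finset.range (q + 2), (q.choose i : ℝ) * (poch a i * poch b (q + 1 - i))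
        = ∑ i ∈ Finset.range (q + 1),
            (q.choose i : ℝ) * (poch a i * poch b (q - i)) * (b + (q - i : ℕ)) := by
      rw [Finset.sum_range_succ]
      simp only [Nat.choose_succ_self, Nat.cast_zero, zero_mul, add_zero]
      apply Finset.sum_congr rfl
      intro i hi
      have hi' : i ≤ q := Finset.mem_range_succ_iff.mp hi
      have h : q + 1 - i = (q - i) + 1 := by omega
      rw [h, poch_succ]; ring
    rw [h1, h2, poch_succ, ← ih, Finset.sum_mul, ← Finset.sum_add_distrib]
    apply Finset.sum_congr rfl
    intro i hi
    have hi' : i ≤ q := Finset.mem_range_succ_iff.mp hi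
    rw [poch_succ]
    have hc : ((q - i : ℕ) : ℝ) = (q : ℝ) - i := by
      rw [Nat.cast_sub hi']
    rw [hc]
    ring

lemma poch_eq_zero (q : ℕ) (hq : q ≠ 0) : poch (1 - q) q = 0 := by
  apply Finset.prod_eq_zero (i := q - 1)
  · exact Finset.mem_range.mpr (by omega)
  · have : ((q - 1 : ℕ) : ℝ) = (q : ℝ) - 1 := by
      rw [Nat.cast_sub (by omega)]; norm_num
    rw [this]; ring

lemma collapse (a b : ℝ) (q : ℕ) (hab : a + b = 1 - q) :
    ∑ v ∈ Finset.range (q + 1),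
        poch a (q - v) * poch b v / ((q - v).factorial * v.factorial)
      = if q = 0 then 1 else 0 := by
  have key : ∀ v ∈ Finset.range (q + 1),
      poch a (q - v) * poch b v / ((q - v).factorial * v.factorial)
        = (q.choose v : ℝ) * (poch b v * poch a (q - v)) / q.factorial := by
    intro v hv
    have hv' : v ≤ q := Finset.mem_range_succ_iff.mp hv
    have hfq : (q.factorial : ℝ) = (q.choose v : ℝ) * v.factorial * (q - v).factorial := by
      exact_mod_cast (Nat.choose_mul_factorial_mul_factorial hv').symm
    rw [hfq]
    have h1 : ((q - v).factorial : ℝ) ≠ 0 := Nat.cast_ne_zero.mpr (Nat.factorial_ne_zero _)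
    have h2 : (v.factorial : ℝ) ≠ 0 := Nat.cast_ne_zero.mpr (Nat.factorial_ne_zero _)
    have h3 : (q.choose v : ℝ) ≠ 0 := Nat.cast_ne_zero.mpr (Nat.choose_pos hv').ne'
    field_simp
  rw [Finset.sum_congr rfl key, ← Finset.sum_div, vand b a q]
  rcases Nat.eq_zero_or_pos q with h | h
  · subst h; simp [poch_zero]
  · have : b + a = 1 - q := by linarith
    rw [this, poch_eq_zero q (by omega), if_neg (by omega), zero_div]


lemma ext_sum (h : ℕ → ℝ) (a s : ℕ) (has : a ≤ s) :
    ∑ k ∈ Finset.range (s + 1), (if k ≤ a then h k else 0)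
      = ∑ k ∈ Finset.range (a + 1), h k := by
  have h1 : Finset.range (a + 1) ⊆ Finset.range (s + 1) := Finset.range_subset_range.mpr (by omega)
  rw [← Finset.sum_subset h1
    (fun k _ hk => if_neg fun hle => hk (Finset.mem_range_succ_iff.mpr hle))]
  exact Finset.sum_congr rfl fun k hk => if_pos (Finset.mem_range_succ_iff.mp hk)

lemma neg_arg_term (p y : ℝ) (k : ℕ) (D : ℝ) :
    (-1 : ℝ) ^ k * p * (-y) ^ k / D = p * y ^ k / D := by
  have h1 : (-1 : ℝ) ^ k * (-1 : ℝ) ^ k = 1 := by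
    rw [← pow_add]; exact Even.neg_one_pow ⟨k, rfl⟩
  have h2 : ((-y) ^ k : ℝ) = (-1) ^ k * y ^ k := neg_pow y k
  rw [h2]
  calc (-1 : ℝ) ^ k * p * ((-1) ^ k * y ^ k) / D
      = ((-1 : ℝ) ^ k * (-1) ^ k) * (p * y ^ k) / D := by ring
    _ = p * y ^ k / D := by rw [h1, one_mul]

lemma lag_conv (β x : ℝ) (s : ℕ) :
    ∑ b ∈ Finset.range (s + 1), lagP β (s - b) (-x) * lagP (-β - s - 1) b x
      = if s = 0 then 1 else 0 := by
  set γ : ℝ := -β - s - 1 with hγ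
  -- guarded expansion of each factor
  have hA : ∀ b ∈ Finset.range (s + 1),
      lagP β (s - b) (-x) * lagP γ b x
        = (∑ k ∈ Finset.range (s + 1), if k ≤ s - b then
            poch (β + k + 1) (s - b - k) * x ^ k / ((s - b - k).factorial * k.factorial) else 0)
          * ∑ l ∈ Finset.range (s + 1), if l ≤ b then
            (-1 : ℝ) ^ l * poch (γ + l + 1) (b - l) * x ^ l /
              ((b - l).factorial * l.factorial) else 0 := by
    intro b hb
    have hb' : b ≤ s := Finset.mem_range_succ_iff.mp hb
    rw [ext_sum _ _ _ (by omega), ext_sum _ _ _ hb']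
    congr 1
    unfold lagP
    exact Finset.sum_congr rfl fun k _ => neg_arg_term _ _ _ _
  rw [Finset.sum_congr rfl hA]
  simp only [Finset.sum_mul_sum]
  rw [Finset.sum_comm]
  have hswap : ∀ k ∈ Finset.range (s + 1),
      (∑ b ∈ Finset.range (s + 1), ∑ l ∈ Finset.range (s + 1),
        (if k ≤ s - b then
            poch (β + k + 1) (s - b - k) * x ^ k / ((s - b - k).factorial * k.factorial) else 0) *
          (if l ≤ b then (-1 : ℝ) ^ l * poch (γ + l + 1) (b - l) * x ^ l /
            ((b - l).factorial * l.factorial) else 0))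
      = ∑ l ∈ Finset.range (s + 1), ∑ b ∈ Finset.range (s + 1),
        (if k ≤ s - b then
            poch (β + k + 1) (s - b - k) * x ^ k / ((s - b - k).factorial * k.factorial) else 0) *
          (if l ≤ b then (-1 : ℝ) ^ l * poch (γ + l + 1) (b - l) * x ^ l /
            ((b - l).factorial * l.factorial) else 0) :=
    fun k _ => Finset.sum_comm
  rw [Finset.sum_congr rfl hswap]
  have hinner : ∀ k ∈ Finset.range (s + 1), ∀ l ∈ Finset.range (s + 1),
      (∑ b ∈ Finset.range (s + 1),
        (if k ≤ s - b then
            poch (β + k + 1) (s - b - k) * x ^ k / ((s - b - k).factorial * k.factorial) else 0) *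
          (if l ≤ b then (-1 : ℝ) ^ l * poch (γ + l + 1) (b - l) * x ^ l /
            ((b - l).factorial * l.factorial) else 0))
      = if s = k + l then
          (-1 : ℝ) ^ l * (x ^ k * x ^ l) / (k.factorial * l.factorial) else 0 := by
    intro k hk l hl
    have hk' : k ≤ s := Finset.mem_range_succ_iff.mp hk
    have hl' : l ≤ s := Finset.mem_range_succ_iff.mp hl
    have step1 : (∑ b ∈ Finset.range (s + 1),
        (if k ≤ s - b then
            poch (β + k + 1) (s - b - k) * x ^ k / ((s - b - k).factorial * k.factorial) else 0) *
          (if l ≤ b then (-1 : ℝ) ^ l * poch (γ + l + 1) (b - l) * x ^ l /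
            ((b - l).factorial * l.factorial) else 0))
        = ∑ b ∈ Finset.Ico l (s - k + 1),
            poch (β + k + 1) (s - b - k) * x ^ k / ((s - b - k).factorial * k.factorial) *
              ((-1 : ℝ) ^ l * poch (γ + l + 1) (b - l) * x ^ l /
                ((b - l).factorial * l.factorial)) := by
      rw [Finset.sum_congr rfl (fun b hb => ?_), Finset.sum_ite_mem,
        Finset.inter_eq_right.mpr (fun b hb => ?_)]
      · rw [Finset.mem_Ico] at hb
        rw [Finset.mem_range]
        omega
      · have hb' : b ≤ s := Finset.mem_range_succ_iff.mp hb
        rw [ite_zero_mul_ite_zero]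
        exact if_congr (by rw [Finset.mem_Ico]; omega) rfl rfl
    rw [step1, Finset.sum_Ico_eq_sum_range]
    by_cases hkl : k + l ≤ s
    · have hq : s - k + 1 - l = (s - k - l) + 1 := by omega
      rw [hq]
      have hterm : ∀ v ∈ Finset.range ((s - k - l) + 1),
          poch (β + k + 1) (s - (l + v) - k) * x ^ k /
              ((s - (l + v) - k).factorial * k.factorial) *
            ((-1 : ℝ) ^ l * poch (γ + l + 1) ((l + v) - l) * x ^ l /
              (((l + v) - l).factorial * l.factorial))
          = ((-1 : ℝ) ^ l * (x ^ k * x ^ l) / (k.factorial * l.factorial)) *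
              (poch (β + k + 1) ((s - k - l) - v) * poch (γ + l + 1) v /
                (((s - k - l) - v).factorial * v.factorial)) := by
        intro v hv
        have e1 : s - (l + v) - k = (s - k - l) - v := by omega
        have e2 : (l + v) - l = v := by omega
        rw [e1, e2]
        ring
      rw [Finset.sum_congr rfl hterm, ← Finset.mul_sum,
        collapse (β + k + 1) (γ + l + 1) (s - k - l) ?hab]
      case hab =>
        have : ((s - k - l : ℕ) : ℝ) = (s : ℝ) - k - l := by
          rw [Nat.cast_sub (by omega : l ≤ s - k), Nat.cast_sub hk']
        rw [this, hγ]
        ring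
      by_cases h0 : s - k - l = 0
      · rw [if_pos h0, if_pos (by omega), mul_one]
      · rw [if_neg h0, if_neg (by omega), mul_zero]
    · rw [show s - k + 1 - l = 0 from by omega, Finset.range_zero, Finset.sum_empty,
        if_neg (by omega)]
  rw [Finset.sum_congr rfl (fun k hk => Finset.sum_congr rfl (hinner k hk))]
  have houter : ∀ k ∈ Finset.range (s + 1),
      (∑ l ∈ Finset.range (s + 1), if s = k + l then
          (-1 : ℝ) ^ l * (x ^ k * x ^ l) / (k.factorial * l.factorial) else 0)
      = (-1 : ℝ) ^ (s - k) * (x ^ k * x ^ (s - k)) / (k.factorial * (s - k).factorial) := by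
    intro k hk
    have hk' : k ≤ s := Finset.mem_range_succ_iff.mp hk
    have hcond : ∀ l ∈ Finset.range (s + 1),
        (if s = k + l then
            (-1 : ℝ) ^ l * (x ^ k * x ^ l) / (k.factorial * l.factorial) else 0)
        = if l = s - k then
            (-1 : ℝ) ^ l * (x ^ k * x ^ l) / (k.factorial * l.factorial) else 0 := by
      intro l hl
      exact if_congr (by omega) rfl rfl
    rw [Finset.sum_congr rfl hcond, Finset.sum_ite_eq' (Finset.range (s + 1)) (s - k)]
    rw [if_pos (Finset.mem_range.mpr (by omega))]
  rw [Finset.sum_congr rfl houter]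
  have hfin : ∀ k ∈ Finset.range (s + 1),
      (-1 : ℝ) ^ (s - k) * (x ^ k * x ^ (s - k)) / (k.factorial * (s - k).factorial)
        = (x ^ s / s.factorial) * ((1 : ℝ) ^ k * (-1 : ℝ) ^ (s - k) * (s.choose k : ℝ)) := by
    intro k hk
    have hk' : k ≤ s := Finset.mem_range_succ_iff.mp hk
    have hx : x ^ k * x ^ (s - k) = x ^ s := by
      rw [← pow_add]
      congr 1
      omega
    have hfq : (s.factorial : ℝ) = (s.choose k : ℝ) * k.factorial * (s - k).factorial := by
      exact_mod_cast (Nat.choose_mul_factorial_mul_factorial hk').symm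
    have h1 : (k.factorial : ℝ) ≠ 0 := Nat.cast_ne_zero.mpr (Nat.factorial_ne_zero _)
    have h2 : ((s - k).factorial : ℝ) ≠ 0 := Nat.cast_ne_zero.mpr (Nat.factorial_ne_zero _)
    have h3 : (s.choose k : ℝ) ≠ 0 := Nat.cast_ne_zero.mpr (Nat.choose_pos hk').ne'
    rw [hx, hfq, one_pow]
    field_simp
  rw [Finset.sum_congr rfl hfin, ← Finset.mul_sum, ← add_pow]
  norm_num
  rcases Nat.eq_zero_or_pos s with h | h
  · subst h
    norm_num
  · rw [zero_pow (by omega), mul_zero, if_neg (by omega)]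

/-- explicit two-sided inverse of the matrix `L_μ^{(α)}(x)`. -/
theorem LagMat_inverse (N : ℕ) (hN : 1 ≤ N) (μ : Fin N → ℝ) (hμ : ∀ k, μ k ≠ 0) (α x : ℝ)
    (M : Matrix (Fin N) (Fin N) ℝ)
    (hM : M = Matrix.of fun m n : Fin N =>
      if (n : ℕ) ≤ (m : ℕ) then
        μ m / μ n * lagP (-α - ((m : ℕ) + 1) - 1) ((m : ℕ) - (n : ℕ)) (-x)
      else 0) :
    M * LagMat N μ α x = 1 ∧ LagMat N μ α x * M = 1 := by
  have key : M * LagMat N μ α x = 1 := by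
    ext m n
    rw [Matrix.mul_apply, Matrix.one_apply, hM]
    simp only [LagMat, Matrix.of_apply]
    set β : ℝ := -α - ((m : ℕ) + 1) - 1 with hβ
    have hterm : ∀ j : Fin N,
        (if (j : ℕ) ≤ (m : ℕ) then μ m / μ j * lagP β ((m : ℕ) - (j : ℕ)) (-x) else 0) *
          (if (n : ℕ) ≤ (j : ℕ) then μ j / μ n * lagP (α + (n : ℕ) + 1) ((j : ℕ) - (n : ℕ)) x
            else 0)
        = μ m / μ n * (if (n : ℕ) ≤ (j : ℕ) ∧ (j : ℕ) ≤ (m : ℕ) then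
            lagP β ((m : ℕ) - (j : ℕ)) (-x) * lagP (α + (n : ℕ) + 1) ((j : ℕ) - (n : ℕ)) x
          else 0) := by
      intro j
      rw [ite_zero_mul_ite_zero]
      by_cases h : (j : ℕ) ≤ (m : ℕ) ∧ (n : ℕ) ≤ (j : ℕ)
      · rw [if_pos h, if_pos ⟨h.2, h.1⟩]
        field_simp [hμ j, hμ n]
      · rw [if_neg h, if_neg fun hh => h ⟨hh.2, hh.1⟩, mul_zero]
    rw [Finset.sum_congr rfl fun j _ => hterm j, ← Finset.mul_sum]
    by_cases hmn : (n : ℕ) ≤ (m : ℕ)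
    · set s : ℕ := (m : ℕ) - (n : ℕ) with hs
      rw [Fin.sum_univ_eq_sum_range (fun j => if (n : ℕ) ≤ j ∧ j ≤ (m : ℕ) then
        lagP β ((m : ℕ) - j) (-x) * lagP (α + (n : ℕ) + 1) (j - (n : ℕ)) x else 0) N]
      have step1 : (∑ j ∈ Finset.range N, if (n : ℕ) ≤ j ∧ j ≤ (m : ℕ) then
            lagP β ((m : ℕ) - j) (-x) * lagP (α + (n : ℕ) + 1) (j - (n : ℕ)) x else 0)
          = ∑ j ∈ Finset.Ico (n : ℕ) ((m : ℕ) + 1),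
              lagP β ((m : ℕ) - j) (-x) * lagP (α + (n : ℕ) + 1) (j - (n : ℕ)) x := by
        rw [Finset.sum_congr rfl (fun j hj => ?_), Finset.sum_ite_mem,
          Finset.inter_eq_right.mpr (fun j hj => ?_)]
        · rw [Finset.mem_Ico] at hj
          rw [Finset.mem_range]
          have := m.isLt
          omega
        · exact if_congr (by rw [Finset.mem_Ico]; omega) rfl rfl
      rw [step1, Finset.sum_Ico_eq_sum_range]
      have hrange : (m : ℕ) + 1 - (n : ℕ) = s + 1 := by omega
      have hstep2 : ∀ v ∈ Finset.range (s + 1),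
          lagP β ((m : ℕ) - ((n : ℕ) + v)) (-x) *
              lagP (α + (n : ℕ) + 1) (((n : ℕ) + v) - (n : ℕ)) x
            = lagP β (s - v) (-x) * lagP (-β - (s : ℝ) - 1) v x := by
        intro v hv
        have e1 : (m : ℕ) - ((n : ℕ) + v) = s - v := by omega
        have e2 : ((n : ℕ) + v) - (n : ℕ) = v := by omega
        have e3 : α + (n : ℕ) + 1 = -β - (s : ℝ) - 1 := by
          rw [hβ, hs, Nat.cast_sub hmn]
          ring
        rw [e1, e2, e3]
      rw [hrange, Finset.sum_congr rfl hstep2, lag_conv β x s]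
      by_cases h0 : m = n
      · rw [if_pos h0, if_pos (by omega), h0, div_self (hμ n), mul_one]
      · rw [if_neg h0, if_neg (by
          intro h
          exact h0 (Fin.ext (by omega))), mul_zero]
    · rw [Finset.sum_eq_zero fun j _ => if_neg (by omega), mul_zero,
        if_neg fun h => hmn (by rw [h])]
  exact ⟨key, mul_eq_one_comm.mp key⟩
end
end

section
/- For every real x, the entrywise derivative of the matrix function L_μ^{(α)} satisfies (d/dx) L_μ^{(α)}(x) = L_μ^{(α)}(x) · A_μ, and consequently L_μ^{(α)}(x) = L_μ^{(α)}(0) · exp(x A_μ), where exp denotes the matrix exponential. -/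
open scoped BigOperators
open Matrix MeasureTheory

noncomputable section

section AuxLemmas

variable {N : ℕ} {μ : Fin N → ℝ}

lemma lagP_zero_n (β x : ℝ) : lagP β 0 x = 1 := by
  simp [lagP, poch]

lemma lagP_eval_zero (β : ℝ) (n : ℕ) : lagP β n 0 = poch (β + 1) n / n.factorial := by
  rw [lagP, Finset.sum_eq_single 0]
  · simp
  · intro k _ hk0
    simp [zero_pow hk0]
  · intro h
    simp at h

lemma scalar_shuffle (a b c P Q : ℝ) (hb : b ≠ 0) :
    a / b * P * (Q * (b / c)) = a / c * (P * Q) := by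
  rw [show a / b * P * (Q * (b / c)) = a / b * (b / c) * (P * Q) from by ring,
    div_mul_div_cancel₀ hb]

lemma lagP_hasDerivAt (β : ℝ) (n : ℕ) (x : ℝ) :
    HasDerivAt (fun t => lagP β (n + 1) t) (-(lagP (β + 1) n x)) x := by
  have H : HasDerivAt (fun t => lagP β (n + 1) t)
      (∑ k ∈ Finset.range (n + 2),
        (-1 : ℝ) ^ k * poch (β + k + 1) (n + 1 - k) * ((k : ℝ) * x ^ (k - 1)) /
          ((n + 1 - k).factorial * k.factorial)) x := by
    simp only [lagP]
    exact HasDerivAt.fun_sum fun k _ =>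
      ((hasDerivAt_pow k x).const_mul ((-1 : ℝ) ^ k * poch (β + k + 1) (n + 1 - k))).div_const _
  convert H using 1
  rw [Finset.sum_range_succ']
  simp only [Nat.cast_zero, zero_mul, mul_zero, zero_div, add_zero]
  rw [lagP, neg_eq_iff_eq_neg, ← Finset.sum_neg_distrib]
  refine Finset.sum_congr rfl fun j hj => ?_
  have h1 : n + 1 - (j + 1) = n - j := by omega
  have h2 : β + (↑(j + 1) : ℝ) + 1 = β + 1 + (j : ℝ) + 1 := by push_cast; ring
  have h3 : ((j + 1).factorial : ℝ) = (j + 1) * j.factorial := by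
    rw [Nat.factorial_succ]; push_cast; ring
  rw [h1, h2] at *
  have hfac1 : ((n - j).factorial : ℝ) ≠ 0 := Nat.cast_ne_zero.mpr (Nat.factorial_ne_zero _)
  have hfac2 : (j.factorial : ℝ) ≠ 0 := Nat.cast_ne_zero.mpr (Nat.factorial_ne_zero _)
  rw [h3]
  have h4 : ((-1 : ℝ)) ^ (j + 1) = -(-1 : ℝ) ^ j := by rw [pow_succ]; ring
  rw [h4]
  simp only [Nat.add_sub_cancel, Nat.cast_add, Nat.cast_one]
  field_simp

lemma mul_Amu_apply (M : Matrix (Fin N) (Fin N) ℝ) (i j : Fin N) :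
    (M * AmuMat N μ) i j =
      if h : (j : ℕ) + 1 < N then M i ⟨(j : ℕ) + 1, h⟩ * (-(μ ⟨(j : ℕ) + 1, h⟩ / μ j)) else 0 := by
  rw [Matrix.mul_apply]
  split
  · next h =>
    rw [Finset.sum_eq_single (⟨(j : ℕ) + 1, h⟩ : Fin N)]
    · simp [AmuMat]
    · intro k _ hk
      have hk' : ¬((k : ℕ) = (j : ℕ) + 1) := fun he => hk (Fin.ext he)
      simp [AmuMat, hk']
    · simp
  · next h =>
    refine Finset.sum_eq_zero fun k _ => ?_
    have hk' : ¬((k : ℕ) = (j : ℕ) + 1) := by have := k.isLt; omega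
    simp [AmuMat, hk']

lemma Amu_pow_apply (hμ : ∀ k, μ k ≠ 0) (k : ℕ) (i j : Fin N) :
    (AmuMat N μ ^ k) i j =
      if (i : ℕ) = (j : ℕ) + k then (-1 : ℝ) ^ k * (μ i / μ j) else 0 := by
  induction k generalizing j with
  | zero =>
    rw [pow_zero, Matrix.one_apply]
    by_cases h : i = j
    · subst h
      simp [div_self (hμ i)]
    · rw [if_neg h, if_neg (by simpa [Fin.ext_iff] using h)]
  | succ k ih =>
    rw [pow_succ, mul_Amu_apply]
    split
    · next h =>
      rw [ih]
      by_cases hc : (i : ℕ) = (j : ℕ) + (k + 1)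
      · have hc' : (i : ℕ) = ((⟨(j : ℕ) + 1, h⟩ : Fin N) : ℕ) + k := by
          simp only [Fin.val_mk]; omega
        rw [if_pos hc', if_pos hc]
        have hne : μ (⟨(j : ℕ) + 1, h⟩ : Fin N) ≠ 0 := hμ _
        have hcan : μ i / μ (⟨(j : ℕ) + 1, h⟩ : Fin N) *
            (μ (⟨(j : ℕ) + 1, h⟩ : Fin N) / μ j) = μ i / μ j := div_mul_div_cancel₀ hne
        calc (-1 : ℝ) ^ k * (μ i / μ (⟨(j : ℕ) + 1, h⟩ : Fin N)) *
              (-(μ (⟨(j : ℕ) + 1, h⟩ : Fin N) / μ j))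
            = -((-1 : ℝ) ^ k * (μ i / μ (⟨(j : ℕ) + 1, h⟩ : Fin N) *
                (μ (⟨(j : ℕ) + 1, h⟩ : Fin N) / μ j))) := by ring
          _ = (-1 : ℝ) ^ (k + 1) * (μ i / μ j) := by rw [hcan, pow_succ]; ring
      · have hc' : ¬((i : ℕ) = ((⟨(j : ℕ) + 1, h⟩ : Fin N) : ℕ) + k) := by
          simp only [Fin.val_mk]; omega
        rw [if_neg hc', if_neg hc, zero_mul]
    · next h =>
      have hc : ¬((i : ℕ) = (j : ℕ) + (k + 1)) := by have := i.isLt; omega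
      rw [if_neg hc]

lemma Amu_pow_eq_zero (hμ : ∀ k, μ k ≠ 0) {n : ℕ} (hn : N ≤ n) : (AmuMat N μ) ^ n = 0 := by
  ext i j
  rw [Amu_pow_apply hμ]
  have h : ¬((i : ℕ) = (j : ℕ) + n) := by have := i.isLt; omega
  simp [h]

lemma exp_Amu_apply (hμ : ∀ k, μ k ≠ 0) (x : ℝ) (i j : Fin N) :
    NormedSpace.exp (x • AmuMat N μ) i j =
      if (j : ℕ) ≤ (i : ℕ) then
        (-1 : ℝ) ^ ((i : ℕ) - j) * x ^ ((i : ℕ) - j) / ((i : ℕ) - j).factorial * (μ i / μ j)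
      else 0 := by
  have hzero : ∀ n ∉ Finset.range N, ((n.factorial : ℝ)⁻¹ • (x • AmuMat N μ) ^ n) = 0 := by
    intro n hn
    rw [Finset.mem_range, not_lt] at hn
    rw [smul_pow, Amu_pow_eq_zero hμ hn, smul_zero, smul_zero]
  have hsum : NormedSpace.exp (x • AmuMat N μ) =
      ∑ n ∈ Finset.range N, ((n.factorial : ℝ)⁻¹ • (x • AmuMat N μ) ^ n) := by
    rw [NormedSpace.exp_eq_tsum (𝕂 := ℝ)]
    exact tsum_eq_sum hzero
  rw [hsum, Matrix.sum_apply]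
  simp only [smul_pow, Matrix.smul_apply, smul_eq_mul]
  by_cases hji : (j : ℕ) ≤ (i : ℕ)
  · rw [if_pos hji, Finset.sum_eq_single ((i : ℕ) - (j : ℕ))]
    · rw [Amu_pow_apply hμ]
      have h : (i : ℕ) = (j : ℕ) + ((i : ℕ) - (j : ℕ)) := by omega
      rw [if_pos h]
      ring
    · intro n _ hn
      rw [Amu_pow_apply hμ]
      have h : ¬((i : ℕ) = (j : ℕ) + n) := by omega
      simp [h]
    · intro h
      exact absurd (Finset.mem_range.mpr (by have := i.isLt; omega)) h
  · rw [if_neg hji]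
    refine Finset.sum_eq_zero fun n _ => ?_
    rw [Amu_pow_apply hμ]
    have h : ¬((i : ℕ) = (j : ℕ) + n) := by omega
    simp [h]

lemma L0_mul_exp (hμ : ∀ k, μ k ≠ 0) (α x : ℝ) :
    LagMat N μ α 0 * NormedSpace.exp (x • AmuMat N μ) = LagMat N μ α x := by
  ext m n
  rw [Matrix.mul_apply]
  have hterm : ∀ k : Fin N,
      LagMat N μ α 0 m k * NormedSpace.exp (x • AmuMat N μ) k n =
      (if (n : ℕ) ≤ (k : ℕ) ∧ (k : ℕ) ≤ (m : ℕ) then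
        μ m / μ n * (poch (α + ((k : ℕ) : ℝ) + 1 + 1) ((m : ℕ) - (k : ℕ)) /
            (((m : ℕ) - (k : ℕ)).factorial : ℝ) *
          ((-1 : ℝ) ^ ((k : ℕ) - (n : ℕ)) * x ^ ((k : ℕ) - (n : ℕ)) /
            ((((k : ℕ) - (n : ℕ)).factorial : ℝ))))
      else 0) := by
    intro k
    rw [exp_Amu_apply hμ]
    simp only [LagMat, Matrix.of_apply]
    by_cases h1 : (k : ℕ) ≤ (m : ℕ)
    · by_cases h2 : (n : ℕ) ≤ (k : ℕ)
      · rw [if_pos h1, if_pos h2, if_pos ⟨h2, h1⟩, lagP_eval_zero,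
          scalar_shuffle _ _ _ _ _ (hμ k)]
      · rw [if_pos h1, if_neg h2, mul_zero, if_neg (fun hc => h2 hc.1)]
    · rw [if_neg h1, zero_mul, if_neg (fun hc => h1 hc.2)]
  rw [Finset.sum_congr rfl fun k _ => hterm k,
    Fin.sum_univ_eq_sum_range (fun k =>
      (if (n : ℕ) ≤ k ∧ k ≤ (m : ℕ) then
        μ m / μ n * (poch (α + (k : ℝ) + 1 + 1) ((m : ℕ) - k) /
            (((m : ℕ) - k).factorial : ℝ) *
          ((-1 : ℝ) ^ (k - (n : ℕ)) * x ^ (k - (n : ℕ)) /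
            (((k - (n : ℕ)).factorial : ℝ))))
      else 0)) N]
  simp only [LagMat, Matrix.of_apply]
  by_cases hnm : (n : ℕ) ≤ (m : ℕ)
  · rw [if_pos hnm]
    have hsubset : Finset.Ico (n : ℕ) ((m : ℕ) + 1) ⊆ Finset.range N := by
      intro k hk
      rw [Finset.mem_Ico] at hk
      rw [Finset.mem_range]
      have := m.isLt
      omega
    rw [← Finset.sum_subset hsubset (fun k _ hk => by
      rw [Finset.mem_Ico, not_and_or] at hk
      have hc : ¬((n : ℕ) ≤ k ∧ k ≤ (m : ℕ)) := by omega
      rw [if_neg hc])]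
    rw [Finset.sum_Ico_eq_sum_range]
    have hrange : (m : ℕ) + 1 - (n : ℕ) = ((m : ℕ) - (n : ℕ)) + 1 := by omega
    rw [hrange, lagP, Finset.mul_sum]
    refine Finset.sum_congr rfl fun j hj => ?_
    rw [Finset.mem_range] at hj
    have hcond : (n : ℕ) ≤ (n : ℕ) + j ∧ (n : ℕ) + j ≤ (m : ℕ) := ⟨by omega, by omega⟩
    rw [if_pos hcond]
    have e1 : (n : ℕ) + j - (n : ℕ) = j := by omega
    have e2 : (m : ℕ) - ((n : ℕ) + j) = (m : ℕ) - (n : ℕ) - j := by omega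
    have e3 : α + ((((n : ℕ) + j : ℕ)) : ℝ) + 1 + 1 = α + ((n : ℕ) : ℝ) + 1 + (j : ℝ) + 1 := by
      push_cast; ring
    rw [e1, e2, e3]
    ring
  · rw [if_neg hnm]
    refine Finset.sum_eq_zero fun k _ => ?_
    have hc : ¬((n : ℕ) ≤ k ∧ k ≤ (m : ℕ)) := by omega
    rw [if_neg hc]

end AuxLemmas

/-- derivative of `L_μ^{(α)}` and its matrix-exponential form. -/
theorem LagMat_deriv_and_exp (N : ℕ) (hN : 1 ≤ N) (μ : Fin N → ℝ) (hμ : ∀ k, μ k ≠ 0)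
    (α x : ℝ) :
    (∀ i j : Fin N,
      HasDerivAt (fun t => LagMat N μ α t i j) ((LagMat N μ α x * AmuMat N μ) i j) x) ∧
    LagMat N μ α x = LagMat N μ α 0 * NormedSpace.exp (x • AmuMat N μ) := by
  constructor
  · intro i j
    rw [mul_Amu_apply]
    by_cases hij : (j : ℕ) ≤ (i : ℕ)
    · by_cases heq : (i : ℕ) = (j : ℕ)
      · have hfun : (fun t => LagMat N μ α t i j) = fun _ => μ i / μ j := by
          funext t
          have e0 : (i : ℕ) - (j : ℕ) = 0 := by omega
          simp only [LagMat, Matrix.of_apply, if_pos hij, e0, lagP_zero_n, mul_one]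
        have hval : (if h : (j : ℕ) + 1 < N then
            LagMat N μ α x i ⟨(j : ℕ) + 1, h⟩ * (-(μ ⟨(j : ℕ) + 1, h⟩ / μ j)) else 0) = 0 := by
          split
          · next h =>
            have hle : ¬(((⟨(j : ℕ) + 1, h⟩ : Fin N) : ℕ) ≤ (i : ℕ)) := by
              simp only [Fin.val_mk]; omega
            simp only [LagMat, Matrix.of_apply, if_neg hle, zero_mul]
          · rfl
        rw [hval, hfun]
        exact hasDerivAt_const x _
      · have hd : (i : ℕ) - (j : ℕ) = ((i : ℕ) - (j : ℕ) - 1) + 1 := by omega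
        have hfun : (fun t => LagMat N μ α t i j) =
            fun t => μ i / μ j * lagP (α + (j : ℕ) + 1) (((i : ℕ) - (j : ℕ) - 1) + 1) t := by
          funext t
          simp only [LagMat, Matrix.of_apply, if_pos hij]
          rw [← hd]
        rw [hfun]
        have hjN : (j : ℕ) + 1 < N := by have := i.isLt; omega
        rw [dif_pos hjN]
        have hDer := (lagP_hasDerivAt (α + (j : ℕ) + 1) ((i : ℕ) - (j : ℕ) - 1) x).const_mul
          (μ i / μ j)
        refine hDer.congr_deriv (Eq.symm ?_)
        simp only [LagMat, Matrix.of_apply, Fin.val_mk]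
        have hle : (j : ℕ) + 1 ≤ (i : ℕ) := by omega
        rw [if_pos hle]
        have e1 : (i : ℕ) - ((j : ℕ) + 1) = (i : ℕ) - (j : ℕ) - 1 := by omega
        have e2 : α + ((((j : ℕ) + 1 : ℕ)) : ℝ) + 1 = α + (j : ℕ) + 1 + 1 := by
          push_cast; ring
        rw [e1, e2]
        have hk : μ (⟨(j : ℕ) + 1, hjN⟩ : Fin N) ≠ 0 := hμ _
        have hcan : μ i / μ (⟨(j : ℕ) + 1, hjN⟩ : Fin N) *
            (μ (⟨(j : ℕ) + 1, hjN⟩ : Fin N) / μ j) = μ i / μ j := div_mul_div_cancel₀ hk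
        calc μ i / μ (⟨(j : ℕ) + 1, hjN⟩ : Fin N) *
              lagP (α + (j : ℕ) + 1 + 1) ((i : ℕ) - (j : ℕ) - 1) x *
              (-(μ (⟨(j : ℕ) + 1, hjN⟩ : Fin N) / μ j))
            = μ i / μ (⟨(j : ℕ) + 1, hjN⟩ : Fin N) *
                (μ (⟨(j : ℕ) + 1, hjN⟩ : Fin N) / μ j) *
                -lagP (α + (j : ℕ) + 1 + 1) ((i : ℕ) - (j : ℕ) - 1) x := by ring
          _ = μ i / μ j * -lagP (α + (j : ℕ) + 1 + 1) ((i : ℕ) - (j : ℕ) - 1) x := by rw [hcan]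
    · have hfun : (fun t => LagMat N μ α t i j) = fun _ => (0 : ℝ) := by
        funext t
        simp only [LagMat, Matrix.of_apply, if_neg hij]
      have hval : (if h : (j : ℕ) + 1 < N then
          LagMat N μ α x i ⟨(j : ℕ) + 1, h⟩ * (-(μ ⟨(j : ℕ) + 1, h⟩ / μ j)) else 0) = 0 := by
        split
        · next h =>
          have hle : ¬(((⟨(j : ℕ) + 1, h⟩ : Fin N) : ℕ) ≤ (i : ℕ)) := by
            simp only [Fin.val_mk]; omega
          simp only [LagMat, Matrix.of_apply, if_neg hle, zero_mul]
        · rfl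
      rw [hval, hfun]
      exact hasDerivAt_const x _
  · exact (L0_mul_exp hμ α x).symm
end
end

section
/- For all integers 0 ≤ n ≤ m, every real α > 0, and every real x, the Laguerre polynomials expand in Hermite polynomials as L_{m−n}^{(α+n)}(−2x) = Σ_{p=n}^{m} [ (α+p+1)_{m−p} / ((m−p)! (p−n)!) ] · ( Σ_{l=0}^{m−p} ((p−m)/2)_l ((p−m+1)/2)_l / ( ((α+p+1)/2)_l ((α+p+2)/2)_l · l! ) ) · H_{p−n}(x). -/
open scoped BigOperators
open Matrix MeasureTheory

noncomputable section

/-- Physicists' Hermite polynomial `H_q(x)`. -/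
def hermiteP (q : ℕ) (x : ℝ) : ℝ :=
  (q.factorial : ℝ) * ∑ m ∈ Finset.range (q / 2 + 1),
    (-1 : ℝ) ^ m * (2 * x) ^ (q - 2 * m) / (m.factorial * (q - 2 * m).factorial)


namespace LagHermAux

lemma poch_succ (a : ℝ) (m : ℕ) : poch a (m+1) = poch a m * (a + m) := by
  simp [poch, Finset.prod_range_succ]

lemma poch_add (a : ℝ) (s t : ℕ) : poch a (s + t) = poch a s * poch (a + s) t := by
  unfold poch
  rw [Finset.prod_range_add]
  congr 1
  exact Finset.prod_congr rfl fun i _ => by push_cast; ring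

lemma poch_pos {a : ℝ} (ha : 0 < a) (m : ℕ) : 0 < poch a m := by
  unfold poch
  exact Finset.prod_pos fun i _ => by positivity

lemma poch_dup (a : ℝ) (l : ℕ) :
    poch (a/2) l * poch ((a+1)/2) l * 4 ^ l = poch a (2*l) := by
  induction l with
  | zero => simp [poch]
  | succ l ih =>
    rw [poch_succ, poch_succ, show 2*(l+1) = 2*l+1+1 by ring, poch_succ, poch_succ, ← ih]
    push_cast; ring

lemma poch_neg_nat (a t : ℕ) (h : t ≤ a) :
    poch (-(a:ℝ)) t = (-1)^t * (a.descFactorial t : ℕ) := by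
  induction t with
  | zero => simp [poch]
  | succ t ih =>
    rw [poch_succ, ih (by omega), Nat.descFactorial_succ]
    have : ((a - t : ℕ) : ℝ) = (a : ℝ) - t := by
      push_cast [Nat.cast_sub (by omega : t ≤ a)]; ring
    push_cast [this]; ring

lemma poch_neg_nat_zero (a t : ℕ) (h : a < t) : poch (-(a:ℝ)) t = 0 :=
  Finset.prod_eq_zero (Finset.mem_range.2 h) (by simp)

lemma sum_if_half (A : ℕ) (g : ℕ → ℝ) :
    ∑ l ∈ Finset.range (A+1), (if 2*l ≤ A then g l else 0)
      = ∑ l ∈ Finset.range (A/2+1), g l := by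
  rw [← Finset.sum_filter]
  apply Finset.sum_congr _ fun _ _ => rfl
  ext l
  simp only [Finset.mem_filter, Finset.mem_range]
  omega

lemma sum_alt_choose (s : ℕ) :
    ∑ j ∈ Finset.range (s+1), (-1:ℝ)^j * (s.choose j) = if s = 0 then 1 else 0 := by
  have := @Int.alternating_sum_range_choose s
  have h2 : ((∑ m ∈ Finset.range (s + 1), (-1:ℤ) ^ m * ↑(s.choose m) : ℤ) : ℝ)
      = ∑ j ∈ Finset.range (s+1), (-1:ℝ)^j * (s.choose j) := by push_cast; rfl
  rw [← h2, this]
  split <;> simp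

lemma collapse (γ : ℝ) (M : ℕ) :
    ∑ j ∈ Finset.range (M/2+1), ∑ l ∈ Finset.range ((M - 2*j)/2 + 1),
      (-1:ℝ)^j / (j.factorial * l.factorial) *
        (poch (γ + 2*(j+l)) (M - 2*(j+l)) / (M - 2*(j+l)).factorial)
    = poch γ M / M.factorial := by
  have e1 := Finset.sum_sigma (Finset.range (M/2+1)) (fun j => Finset.range ((M-2*j)/2+1))
    (fun x : Σ _ : ℕ, ℕ => (-1:ℝ)^x.1 / (x.1.factorial * x.2.factorial) *
      (poch (γ + 2*(x.1+x.2)) (M - 2*(x.1+x.2)) / (M - 2*(x.1+x.2)).factorial))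
  rw [← e1]
  have e2 := Finset.sum_sigma (Finset.range (M/2+1)) (fun s => Finset.range (s+1))
    (fun y : Σ _ : ℕ, ℕ => (-1:ℝ)^y.2 / (y.2.factorial * (y.1 - y.2).factorial) *
      (poch (γ + 2*y.1) (M - 2*y.1) / (M - 2*y.1).factorial))
  rw [Finset.sum_nbij' (i := fun x : Σ _ : ℕ, ℕ => (⟨x.1 + x.2, x.1⟩ : Σ _ : ℕ, ℕ))
      (j := fun y : Σ _ : ℕ, ℕ => (⟨y.2, y.1 - y.2⟩ : Σ _ : ℕ, ℕ))
      (t := (Finset.range (M/2+1)).sigma fun s => Finset.range (s+1))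
      (g := fun y : Σ _ : ℕ, ℕ => (-1:ℝ)^y.2 / (y.2.factorial * (y.1 - y.2).factorial) *
        (poch (γ + 2*y.1) (M - 2*y.1) / (M - 2*y.1).factorial))]
  · rw [e2]
    have h1 : ∀ s ∈ Finset.range (M/2+1),
        ∑ j ∈ Finset.range (s+1), (-1:ℝ)^j / (j.factorial * (s - j).factorial) *
          (poch (γ + 2*s) (M - 2*s) / (M - 2*s).factorial)
        = (if s = 0 then 1 else 0) / s.factorial *
          (poch (γ + 2*s) (M - 2*s) / (M - 2*s).factorial) := by
      intro s _
      rw [← Finset.sum_mul]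
      congr 1
      rw [← sum_alt_choose s, Finset.sum_div]
      apply Finset.sum_congr rfl
      intro j hj
      have hj' : j ≤ s := Nat.lt_succ_iff.mp (Finset.mem_range.mp hj)
      have hfac : ((s.choose j : ℝ)) * j.factorial * (s-j).factorial = s.factorial := by
        exact_mod_cast congrArg (Nat.cast (R := ℝ)) (Nat.choose_mul_factorial_mul_factorial hj')
      have n1 : (j.factorial : ℝ) ≠ 0 := Nat.cast_ne_zero.2 j.factorial_ne_zero
      have n2 : ((s-j).factorial : ℝ) ≠ 0 := Nat.cast_ne_zero.2 (s-j).factorial_ne_zero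
      have n3 : (s.factorial : ℝ) ≠ 0 := Nat.cast_ne_zero.2 s.factorial_ne_zero
      rw [div_eq_div_iff (by positivity) n3]
      linear_combination (-(-1:ℝ)^j) * hfac
    rw [Finset.sum_congr rfl h1]
    rw [Finset.sum_eq_single 0]
    · simp
    · intro s _ hs; simp [hs]
    · intro h; simp at h
  · rintro ⟨j, l⟩ h
    simp only [Finset.mem_sigma, Finset.mem_range] at h
    simp only [Finset.mem_sigma, Finset.mem_range]
    omega
  · rintro ⟨s, j⟩ h
    simp only [Finset.mem_sigma, Finset.mem_range] at h
    simp only [Finset.mem_sigma, Finset.mem_range]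
    omega
  · rintro ⟨j, l⟩ h
    simp only [Finset.mem_sigma, Finset.mem_range] at h
    have : j + l - j = l := by omega
    simp [this]
  · rintro ⟨s, j⟩ h
    simp only [Finset.mem_sigma, Finset.mem_range] at h
    have : j + (s - j) = s := by omega
    simp [this]
  · rintro ⟨j, l⟩ h
    simp only [Finset.mem_sigma, Finset.mem_range] at h
    have hl : j + l - j = l := by omega
    simp only [hl]
    push_cast
    ring_nf

lemma inner_eq (γ : ℝ) (hγ : 0 < γ) (M j : ℕ) (hj : 2*j ≤ M) :
    (poch (γ + 2*(j:ℝ)) (M - 2*j) / (M - 2*j).factorial) *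
      (∑ l ∈ Finset.range (M - 2*j + 1),
        poch ((2*(j:ℝ) - M)/2) l * poch ((2*(j:ℝ) - M + 1)/2) l /
          (poch ((γ + 2*(j:ℝ))/2) l * poch ((γ + 2*(j:ℝ) + 1)/2) l * l.factorial)) *
      ((-1:ℝ)^j / j.factorial)
    = ∑ l ∈ Finset.range ((M - 2*j)/2 + 1),
        (-1:ℝ)^j / (j.factorial * l.factorial) *
          (poch (γ + 2*((j:ℝ)+l)) (M - 2*(j+l)) / (M - 2*(j+l)).factorial) := by
  set A := M - 2*j with hA
  have hcast : (2*(j:ℝ) - M) = -(A:ℝ) := by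
    rw [hA]; push_cast [Nat.cast_sub hj]; ring
  have key : ∀ l ∈ Finset.range (A+1),
      (poch (γ + 2*(j:ℝ)) A / A.factorial) *
        (poch ((2*(j:ℝ) - M)/2) l * poch ((2*(j:ℝ) - M + 1)/2) l /
          (poch ((γ + 2*(j:ℝ))/2) l * poch ((γ + 2*(j:ℝ) + 1)/2) l * l.factorial)) *
        ((-1:ℝ)^j / j.factorial)
      = (if 2*l ≤ A then
          (-1:ℝ)^j / (j.factorial * l.factorial) *
            (poch (γ + 2*(j:ℝ) + 2*l) (A - 2*l) / (A - 2*l).factorial) else 0) := by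
    intro l _
    have hd := poch_dup (-(A:ℝ)) l
    have he := poch_dup (γ + 2*(j:ℝ)) l
    have h4 : (4:ℝ)^l ≠ 0 := by positivity
    have hXY : poch ((2*(j:ℝ) - M)/2) l * poch ((2*(j:ℝ) - M + 1)/2) l
        = poch (-(A:ℝ)) (2*l) / 4^l := by
      rw [eq_div_iff h4, ← hd, hcast]
    have hUV : poch ((γ + 2*(j:ℝ))/2) l * poch ((γ + 2*(j:ℝ) + 1)/2) l
        = poch (γ + 2*(j:ℝ)) (2*l) / 4^l := by
      rw [eq_div_iff h4, ← he]
    rw [hXY, hUV]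
    by_cases h2 : 2*l ≤ A
    · rw [if_pos h2]
      have hneg : poch (-(A:ℝ)) (2*l) = (A.descFactorial (2*l) : ℝ) := by
        rw [poch_neg_nat A (2*l) h2, pow_mul]; norm_num
      have hsplit : poch (γ + 2*(j:ℝ)) A
          = poch (γ + 2*(j:ℝ)) (2*l) * poch (γ + 2*(j:ℝ) + 2*l) (A - 2*l) := by
        have := poch_add (γ + 2*(j:ℝ)) (2*l) (A - 2*l)
        rw [show 2*l + (A - 2*l) = A from by omega] at this
        rw [this]; push_cast; ring_nf
      have hdesc : ((A.descFactorial (2*l) : ℝ)) = A.factorial / (A - 2*l).factorial := by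
        rw [eq_div_iff (Nat.cast_ne_zero.2 (A - 2*l).factorial_ne_zero)]
        exact_mod_cast (Nat.mul_comm _ _).trans (Nat.factorial_mul_descFactorial h2)
      rw [hneg, hdesc, hsplit]
      have nQ : poch (γ + 2*(j:ℝ)) (2*l) ≠ 0 := ne_of_gt (poch_pos (by positivity) _)
      have nf1 : ((A - 2*l).factorial : ℝ) ≠ 0 := Nat.cast_ne_zero.2 (A - 2*l).factorial_ne_zero
      have nf2 : (A.factorial : ℝ) ≠ 0 := Nat.cast_ne_zero.2 A.factorial_ne_zero
      have nf3 : (l.factorial : ℝ) ≠ 0 := Nat.cast_ne_zero.2 l.factorial_ne_zero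
      have nf4 : (j.factorial : ℝ) ≠ 0 := Nat.cast_ne_zero.2 j.factorial_ne_zero
      field_simp
    · rw [if_neg h2]
      have hz : poch (-(A:ℝ)) (2*l) = 0 := poch_neg_nat_zero A (2*l) (by omega)
      rw [hz]
      simp
  rw [Finset.mul_sum, Finset.sum_mul, Finset.sum_congr rfl key, sum_if_half]
  apply Finset.sum_congr rfl
  intro l _
  have h1 : γ + 2*(j:ℝ) + 2*l = γ + 2*((j:ℝ) + l) := by ring
  have h2 : A - 2*l = M - 2*(j+l) := by omega
  rw [h1, h2]

def hco (q k : ℕ) : ℝ :=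
  if k ≤ q ∧ 2 ∣ (q - k) then
    (-1:ℝ)^((q-k)/2) * q.factorial * 2^k / (((q-k)/2).factorial * k.factorial) else 0

lemma hermite_expand (N q : ℕ) (hq : q ≤ N) (x : ℝ) :
    hermiteP q x = ∑ k ∈ Finset.range (N+1), hco q k * x^k := by
  unfold hermiteP
  rw [Finset.mul_sum]
  have : ∑ k ∈ Finset.range (N+1), hco q k * x^k
      = ∑ k ∈ (Finset.range (N+1)).filter (fun k => k ≤ q ∧ 2 ∣ (q - k)),
          ((-1:ℝ)^((q-k)/2) * q.factorial * 2^k / (((q-k)/2).factorial * k.factorial)) * x^k := by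
    rw [Finset.sum_filter]
    apply Finset.sum_congr rfl
    intro k _
    unfold hco
    by_cases h : k ≤ q ∧ 2 ∣ (q - k) <;> simp [h]
  rw [this]
  apply Finset.sum_nbij' (i := fun t => q - 2*t) (j := fun k => (q - k)/2)
  · intro t ht
    simp only [Finset.mem_range] at ht
    simp only [Finset.mem_filter, Finset.mem_range]
    omega
  · intro k hk
    simp only [Finset.mem_filter, Finset.mem_range] at hk
    simp only [Finset.mem_range]
    omega
  · intro t ht
    simp only [Finset.mem_range] at ht
    omega
  · intro k hk
    simp only [Finset.mem_filter, Finset.mem_range] at hk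
    omega
  · intro t ht
    simp only [Finset.mem_range] at ht
    have h2 : (q - (q - 2*t))/2 = t := by omega
    rw [h2]
    have h3 : (2*x)^(q - 2*t) = 2^(q-2*t) * x^(q-2*t) := mul_pow 2 x _
    rw [h3]
    ring


def Sfac (β : ℝ) (N q : ℕ) : ℝ :=
  ∑ l ∈ Finset.range (N - q + 1),
    poch (((q:ℝ) - N)/2) l * poch (((q:ℝ) - N + 1)/2) l /
      (poch ((β + q + 1)/2) l * poch ((β + q + 2)/2) l * l.factorial)

lemma lag_expand (β : ℝ) (N : ℕ) (x : ℝ) :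
    lagP β N (-2*x) = ∑ k ∈ Finset.range (N+1),
      poch (β + k + 1) (N - k) * 2^k / ((N - k).factorial * k.factorial) * x^k := by
  unfold lagP
  apply Finset.sum_congr rfl
  intro k _
  have h1 : (-1:ℝ)^k * (-2*x)^k = 2^k * x^k := by
    rw [← mul_pow, show (-1:ℝ) * (-2*x) = 2*x by ring, mul_pow]
  calc (-1:ℝ)^k * poch (β + k + 1) (N - k) * (-2*x)^k / ((N - k).factorial * k.factorial)
      = poch (β + k + 1) (N - k) * ((-1:ℝ)^k * (-2*x)^k) / ((N - k).factorial * k.factorial) := by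
        ring
    _ = _ := by rw [h1]; ring

lemma step3 (β : ℝ) (hβ : 0 < β) (N k : ℕ) (hk : k ≤ N) :
    ∑ q ∈ Finset.range (N+1),
      (poch (β + q + 1) (N - q) / ((N - q).factorial * q.factorial) * Sfac β N q) * hco q k
    = poch (β + k + 1) (N - k) * 2^k / ((N - k).factorial * k.factorial) := by
  -- restrict to the filter
  rw [show (∑ q ∈ Finset.range (N+1),
      (poch (β + q + 1) (N - q) / ((N - q).factorial * q.factorial) * Sfac β N q) * hco q k)
    = ∑ q ∈ (Finset.range (N+1)).filter (fun q => k ≤ q ∧ 2 ∣ (q - k)),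
      (poch (β + q + 1) (N - q) / ((N - q).factorial * q.factorial) * Sfac β N q) *
        ((-1:ℝ)^((q-k)/2) * q.factorial * 2^k / (((q-k)/2).factorial * k.factorial)) from by
    rw [Finset.sum_filter]
    apply Finset.sum_congr rfl
    intro q _
    unfold hco
    by_cases h : k ≤ q ∧ 2 ∣ (q - k) <;> simp [h]]
  -- reindex q = k + 2j
  rw [Finset.sum_nbij' (i := fun q => (q - k)/2) (j := fun j => k + 2*j)
      (t := Finset.range ((N-k)/2 + 1))
      (g := fun j =>
        (poch (β + ↑(k+2*j) + 1) (N - (k+2*j)) / ((N - (k+2*j)).factorial * (k+2*j).factorial) *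
          Sfac β N (k+2*j)) *
        ((-1:ℝ)^j * (k+2*j).factorial * 2^k / (j.factorial * k.factorial)))]
  · -- now prove the reindexed sum equals RHS
    set M := N - k with hM
    have hsum : ∀ j ∈ Finset.range (M/2 + 1),
        (poch (β + ↑(k+2*j) + 1) (N - (k+2*j)) / ((N - (k+2*j)).factorial * (k+2*j).factorial) *
          Sfac β N (k+2*j)) *
        ((-1:ℝ)^j * (k+2*j).factorial * 2^k / (j.factorial * k.factorial))
        = (2^k / k.factorial) *
          ((poch ((β + k + 1) + 2*(j:ℝ)) (M - 2*j) / (M - 2*j).factorial) *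
            (∑ l ∈ Finset.range (M - 2*j + 1),
              poch ((2*(j:ℝ) - M)/2) l * poch ((2*(j:ℝ) - M + 1)/2) l /
                (poch (((β + k + 1) + 2*(j:ℝ))/2) l * poch (((β + k + 1) + 2*(j:ℝ) + 1)/2) l *
                  l.factorial)) *
            ((-1:ℝ)^j / j.factorial)) := by
      intro j hj
      simp only [Finset.mem_range] at hj
      have h2j : 2*j ≤ M := by omega
      have e1 : (β + ↑(k+2*j) + 1) = (β + k + 1) + 2*(j:ℝ) := by push_cast; ring
      have e2 : N - (k+2*j) = M - 2*j := by omega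
      have e3 : Sfac β N (k+2*j)
          = ∑ l ∈ Finset.range (M - 2*j + 1),
              poch ((2*(j:ℝ) - M)/2) l * poch ((2*(j:ℝ) - M + 1)/2) l /
                (poch (((β + k + 1) + 2*(j:ℝ))/2) l * poch (((β + k + 1) + 2*(j:ℝ) + 1)/2) l *
                  l.factorial) := by
        unfold Sfac
        rw [e2]
        apply Finset.sum_congr rfl
        intro l _
        have c1 : ((k+2*j : ℕ) : ℝ) - N = 2*(j:ℝ) - M := by
          push_cast [hM, Nat.cast_sub (show k ≤ N by omega)]
          ring
        have c2 : (β + ↑(k+2*j) + 1) = (β + k + 1) + 2*(j:ℝ) := e1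
        have c3 : (β + ↑(k+2*j) + 2) = (β + k + 1) + 2*(j:ℝ) + 1 := by push_cast; ring
        rw [c1, c2, c3]
      rw [e1, e2, e3]
      have nfac : ((k+2*j).factorial : ℝ) ≠ 0 := Nat.cast_ne_zero.2 (k+2*j).factorial_ne_zero
      field_simp
    rw [Finset.sum_congr rfl hsum, ← Finset.mul_sum]
    have hβk : 0 < β + k + 1 := by positivity
    rw [Finset.sum_congr rfl (fun j hj => inner_eq (β + k + 1) hβk M j
        (by simp only [Finset.mem_range] at hj; omega)), collapse]
    rw [show poch (β + k + 1) M = poch (β + ↑k + 1) (N - k) from by rw [hM]]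
    field_simp
  · intro q hq
    simp only [Finset.mem_filter, Finset.mem_range] at hq
    simp only [Finset.mem_range]
    omega
  · intro j hj
    simp only [Finset.mem_range] at hj
    simp only [Finset.mem_filter, Finset.mem_range]
    omega
  · intro q hq
    simp only [Finset.mem_filter, Finset.mem_range] at hq
    omega
  · intro j hj
    simp only [Finset.mem_range] at hj
    omega
  · intro q hq
    simp only [Finset.mem_filter, Finset.mem_range] at hq
    have h1 : k + 2*((q-k)/2) = q := by omega
    rw [h1]

lemma key (β : ℝ) (hβ : 0 < β) (N : ℕ) (x : ℝ) :
    lagP β N (-2*x) = ∑ q ∈ Finset.range (N+1),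
      poch (β + q + 1) (N - q) / ((N - q).factorial * q.factorial) * Sfac β N q *
        hermiteP q x := by
  have h1 : ∀ q ∈ Finset.range (N+1),
      poch (β + q + 1) (N - q) / ((N - q).factorial * q.factorial) * Sfac β N q *
        hermiteP q x
      = ∑ k ∈ Finset.range (N+1),
          (poch (β + q + 1) (N - q) / ((N - q).factorial * q.factorial) * Sfac β N q * hco q k)
            * x^k := by
    intro q hq
    simp only [Finset.mem_range] at hq
    rw [hermite_expand N q (by omega) x, Finset.mul_sum]
    apply Finset.sum_congr rfl
    intro k _
    ring
  rw [Finset.sum_congr rfl h1, Finset.sum_comm, lag_expand]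
  apply Finset.sum_congr rfl
  intro k hk
  simp only [Finset.mem_range] at hk
  rw [← Finset.sum_mul, step3 β hβ N k (by omega)]

end LagHermAux

open LagHermAux in
/-- connection coefficients between Laguerre and Hermite polynomials. -/
theorem laguerre_hermite_connection (m n : ℕ) (hnm : n ≤ m) (α : ℝ) (hα : 0 < α) (x : ℝ) :
    lagP (α + n) (m - n) (-2 * x) =
      ∑ p ∈ Finset.Icc n m,
        poch (α + p + 1) (m - p) / ((m - p).factorial * (p - n).factorial) *
          (∑ l ∈ Finset.range (m - p + 1),
            poch (((p : ℝ) - m) / 2) l * poch (((p : ℝ) - m + 1) / 2) l /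
              (poch ((α + p + 1) / 2) l * poch ((α + p + 2) / 2) l * l.factorial)) *
          hermiteP (p - n) x := by
  have hβ : 0 < α + (n:ℝ) := by positivity
  rw [key (α + n) hβ (m - n) x]
  set N := m - n with hN
  apply Finset.sum_nbij' (i := fun q => n + q) (j := fun p => p - n)
  · intro q hq
    simp only [Finset.mem_range] at hq
    simp only [Finset.mem_Icc]
    omega
  · intro p hp
    simp only [Finset.mem_Icc] at hp
    simp only [Finset.mem_range]
    omega
  · intro q hq
    simp only [Finset.mem_range] at hq
    omega
  · intro p hp
    simp only [Finset.mem_Icc] at hp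
    omega
  · intro q hq
    simp only [Finset.mem_range] at hq
    have e2 : m - (n + q) = N - q := by omega
    have e3 : (n + q) - n = q := by omega
    have e1 : α + ↑(n + q) + 1 = α + ↑n + ↑q + 1 := by push_cast; ring
    have e4 : α + ↑(n + q) + 2 = α + ↑n + ↑q + 2 := by push_cast; ring
    have e5 : ((↑(n + q) : ℝ) - ↑m) = (↑q : ℝ) - ↑N := by
      push_cast [hN, Nat.cast_sub hnm]; ring
    rw [e2, e3, e1, e4, e5]
    rfl
end
end

section
/- Let ν > 0 and take α = ν. Then the 0-th moment of the weight is diagonal: for i ≠ j one has ∫_0^∞ (W_μ^{(ν,ν)}(x))_{i,j} dx = 0, and for each 1 ≤ j ≤ N, ∫_0^∞ (W_μ^{(ν,ν)}(x))_{j,j} dx = (μ_j² Γ(ν+j+1) / (j−1)!) · Σ_{k=1}^{j} (δ_k^{(ν)}/μ_k²) (−1)^{k+1} (−j+1)_{k−1}, where Γ is the Gamma function. -/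
open scoped BigOperators
open Matrix MeasureTheory

noncomputable section

lemma moment_integrable {t : ℝ} (ht : 0 < t) :
    IntegrableOn (fun x => Real.exp (-x) * x ^ t) (Set.Ioi (0:ℝ)) := by
  have := Real.GammaIntegral_convergent (s := t+1) (by linarith)
  simpa using this

lemma moment_eq {t : ℝ} (ht : 0 < t) :
    ∫ x in Set.Ioi (0:ℝ), Real.exp (-x) * x ^ t = Real.Gamma (t+1) := by
  rw [Real.Gamma_eq_integral (by linarith : (0:ℝ) < t+1)]
  simp

lemma gamma_poch {x : ℝ} (hx : 0 < x) (m : ℕ) :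
    Real.Gamma (x + m) = poch x m * Real.Gamma x := by
  induction m with
  | zero => simp [poch]
  | succ m ih =>
    have hxm : x + (m:ℝ) ≠ 0 := by positivity
    have : x + ((m+1 : ℕ):ℝ) = (x + m) + 1 := by push_cast; ring
    rw [this, Real.Gamma_add_one hxm, ih]
    simp only [poch, Finset.prod_range_succ]
    ring

lemma findiff_step (n : ℕ) (f : ℕ → ℝ) :
    ∑ a ∈ Finset.range (n+2), (-1:ℝ)^a * ((n+1).choose a) * f a
    = ∑ a ∈ Finset.range (n+1), (-1:ℝ)^a * (n.choose a) * (f a - f (a+1)) := by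
  rw [Finset.sum_range_succ' (fun a => (-1:ℝ)^a * ((n+1).choose a) * f a) (n+1)]
  have h2 : ∀ b, (-1:ℝ)^(b+1) * ((n+1).choose (b+1)) * f (b+1)
      = -((-1:ℝ)^b * (n.choose b) * f (b+1)) - (-1:ℝ)^b * (n.choose (b+1)) * f (b+1) := by
    intro b
    rw [Nat.choose_succ_succ]
    push_cast
    ring
  simp only [h2, mul_sub]
  rw [Finset.sum_sub_distrib, Finset.sum_sub_distrib]
  have h3 : ∑ a ∈ Finset.range (n+1), (-1:ℝ)^a * (n.choose a) * f a
      = (∑ b ∈ Finset.range n, (-1:ℝ)^(b+1) * (n.choose (b+1)) * f (b+1)) + f 0 := by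
    rw [Finset.sum_range_succ' (fun a => (-1:ℝ)^a * (n.choose a) * f a) n]
    simp
  rw [h3]
  have h4 : ∑ b ∈ Finset.range (n+1), (-1:ℝ)^b * (n.choose (b+1)) * f (b+1)
      = ∑ b ∈ Finset.range n, (-1:ℝ)^b * (n.choose (b+1)) * f (b+1) := by
    rw [Finset.sum_range_succ]
    simp
  rw [h4]
  have h5 : ∀ b, (-1:ℝ)^(b+1) * (n.choose (b+1)) * f (b+1)
      = -((-1:ℝ)^b * (n.choose (b+1)) * f (b+1)) := by intro b; ring
  simp only [h5, Finset.sum_neg_distrib]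
  simp only [Nat.choose_zero_right, Nat.cast_one]
  ring

lemma findiff (n : ℕ) (P : Polynomial ℝ) (hP : P.natDegree ≤ n) :
    ∑ a ∈ Finset.range (n+1), (-1:ℝ)^a * (n.choose a) * P.eval (a:ℝ)
    = (-1:ℝ)^n * n.factorial * P.coeff n := by
  induction n generalizing P with
  | zero =>
    have : P.coeff 0 = P.eval ((0:ℕ):ℝ) := by
      rw [Polynomial.coeff_zero_eq_eval_zero]; norm_num
    rw [this]
    norm_num
  | succ n ih =>
    set Q : Polynomial ℝ := P - Polynomial.taylor 1 P with hQdef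
    have hc : ∀ m, (Polynomial.taylor (1:ℝ) P).coeff m = ((Polynomial.hasseDeriv m P).eval 1) :=
      fun m => Polynomial.taylor_coeff (r := (1:ℝ)) (f := P) m
    have hev : ∀ m : ℕ, P.natDegree ≤ m + 1 →
        (Polynomial.hasseDeriv m P).eval (1:ℝ) = P.coeff m + (m+1) * P.coeff (m+1) := by
      intro m hm
      have hdeg : (Polynomial.hasseDeriv m P).natDegree < 2 := by
        have := Polynomial.natDegree_hasseDeriv_le P m
        omega
      rw [Polynomial.eval_eq_sum_range' hdeg]
      rw [Finset.sum_range_succ, Finset.sum_range_one]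
      simp only [Polynomial.hasseDeriv_coeff]
      have : (1 + m).choose m = m + 1 := by
        rw [Nat.add_comm]; exact Nat.choose_succ_self_right m
      rw [this]
      norm_num [Nat.add_comm 0 m, Nat.add_comm 1 m]
    have hQcoeff : Q.coeff n = -((n:ℝ)+1) * P.coeff (n+1) := by
      rw [hQdef, Polynomial.coeff_sub, hc n, hev n hP]; ring
    have hQdeg : Q.natDegree ≤ n := by
      rw [Polynomial.natDegree_le_iff_coeff_eq_zero]
      intro m hm
      rcases eq_or_lt_of_le (Nat.succ_le_of_lt hm) with h | h
      · rw [← h, hQdef, Polynomial.coeff_sub, hc, hev (n+1) (by omega)]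
        have h0 : P.coeff (n+1+1) = 0 := Polynomial.coeff_eq_zero_of_natDegree_lt (by omega)
        rw [h0]; ring
      · rw [hQdef, Polynomial.coeff_sub]
        have h1 : P.coeff m = 0 := Polynomial.coeff_eq_zero_of_natDegree_lt (by omega)
        have h2 : (Polynomial.taylor (1:ℝ) P).coeff m = 0 :=
          Polynomial.coeff_eq_zero_of_natDegree_lt (by rw [Polynomial.natDegree_taylor]; omega)
        rw [h1, h2]; ring
    rw [findiff_step n (fun a => P.eval (a:ℝ))]
    have heq : ∀ a ∈ Finset.range (n+1),
        (-1:ℝ)^a * (n.choose a) * (P.eval (a:ℝ) - P.eval ((a+1:ℕ):ℝ))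
        = (-1:ℝ)^a * (n.choose a) * Q.eval (a:ℝ) := by
      intro a _
      rw [hQdef, Polynomial.eval_sub, Polynomial.taylor_eval]
      push_cast
      ring_nf
    rw [Finset.sum_congr rfl heq, ih Q hQdeg, hQcoeff]
    rw [Nat.factorial_succ]
    push_cast
    ring

lemma poch_as_eval (c : ℝ) (j : ℕ) (a : ℝ) :
    poch (c + a) j = (∏ i ∈ Finset.range j, (Polynomial.X + Polynomial.C (c + (i:ℝ)))).eval a := by
  rw [Polynomial.eval_prod, poch]
  apply Finset.prod_congr rfl
  intro i _
  simp
  ring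

lemma poch_findiff (c : ℝ) (n j : ℕ) (hj : j ≤ n) :
    ∑ a ∈ Finset.range (n+1), (-1:ℝ)^a * (n.choose a) * poch (c + a) j
    = if j = n then (-1:ℝ)^n * n.factorial else 0 := by
  set P := ∏ i ∈ Finset.range j, (Polynomial.X + Polynomial.C (c + (i:ℝ))) with hP
  have hmono : ∀ i ∈ Finset.range j, (Polynomial.X + Polynomial.C (c + (i:ℝ))).Monic :=
    fun i _ => Polynomial.monic_X_add_C _
  have hmonic : P.Monic := Polynomial.monic_prod_of_monic _ _ hmono
  have hdeg : P.natDegree = j := by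
    rw [hP, Polynomial.natDegree_prod_of_monic _ _ hmono]
    have h1 : ∀ i ∈ Finset.range j, (Polynomial.X + Polynomial.C (c + (i:ℝ))).natDegree = 1 :=
      fun i _ => Polynomial.natDegree_X_add_C _
    rw [Finset.sum_congr rfl h1, Finset.sum_const, Finset.card_range, smul_eq_mul, mul_one]
  simp only [poch_as_eval c j]
  rw [← hP, findiff n P (by omega)]
  by_cases h : j = n
  · subst h
    rw [if_pos rfl]
    have h1 : P.coeff j = 1 := by
      have := hmonic.coeff_natDegree
      rwa [hdeg] at this
    rw [h1, mul_one]
  · rw [if_neg h]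
    have h0 : P.coeff n = 0 := Polynomial.coeff_eq_zero_of_natDegree_lt (by omega)
    rw [h0, mul_zero]

lemma lag_expand (p : ℝ) (n j : ℕ) {x : ℝ} (hx : 0 < x) :
    Real.exp (-x) * x ^ p * x ^ j * lagP p n x
    = ∑ a ∈ Finset.range (n+1),
        ((-1:ℝ)^a * poch (p+a+1) (n-a) / ((n-a).factorial * a.factorial))
          * (Real.exp (-x) * x ^ (p + j + a)) := by
  rw [lagP, Finset.mul_sum]
  apply Finset.sum_congr rfl
  intro a _
  have hxp : x ^ (p + (j:ℝ) + (a:ℝ)) = x ^ p * x ^ (j:ℕ) * x ^ (a:ℕ) := by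
    rw [Real.rpow_add hx, Real.rpow_add hx, Real.rpow_natCast, Real.rpow_natCast]
  rw [hxp]
  ring

lemma lagmono_int (p : ℝ) (hp : 0 < p) (n j : ℕ) :
    IntegrableOn (fun x => Real.exp (-x) * x ^ p * x ^ j * lagP p n x) (Set.Ioi (0:ℝ)) := by
  have hsum : IntegrableOn (fun x => ∑ a ∈ Finset.range (n+1),
      ((-1:ℝ)^a * poch (p+a+1) (n-a) / ((n-a).factorial * a.factorial))
        * (Real.exp (-x) * x ^ (p + j + a))) (Set.Ioi (0:ℝ)) := by
    apply MeasureTheory.integrable_finset_sum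
    intro a _
    exact (moment_integrable (t := p + j + a) (by positivity)).const_mul _
  exact hsum.congr_fun (fun x hx => (lag_expand p n j hx).symm) measurableSet_Ioi

lemma lag_moment (p : ℝ) (hp : 0 < p) (n j : ℕ) (hj : j ≤ n) :
    ∫ x in Set.Ioi (0:ℝ), Real.exp (-x) * x ^ p * x ^ j * lagP p n x
    = if j = n then (-1:ℝ)^n * Real.Gamma (p+n+1) else 0 := by
  rw [MeasureTheory.setIntegral_congr_fun measurableSet_Ioi
      (fun x hx => lag_expand p n j hx)]
  rw [MeasureTheory.integral_finset_sum (Finset.range (n+1))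
      (f := fun (a : ℕ) (x : ℝ) => ((-1:ℝ)^a * poch (p+a+1) (n-a) / ((n-a).factorial * a.factorial))
        * (Real.exp (-x) * x ^ (p + j + a)))
      (fun a _ => ((moment_integrable (t := p + j + a) (by positivity)).const_mul _))]
  have h1 : ∀ a ∈ Finset.range (n+1),
      (∫ x in Set.Ioi (0:ℝ), ((-1:ℝ)^a * poch (p+a+1) (n-a) / ((n-a).factorial * a.factorial))
          * (Real.exp (-x) * x ^ (p + j + a)))
      = Real.Gamma (p+n+1) / n.factorial * ((-1:ℝ)^a * (n.choose a) * poch ((p+1) + a) j) := by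
    intro a ha
    have ha' : a ≤ n := by have := Finset.mem_range.mp ha; omega
    rw [MeasureTheory.integral_const_mul, moment_eq (by positivity)]
    have key : poch (p+a+1) (n-a) * Real.Gamma (p + j + a + 1)
        = Real.Gamma (p+n+1) * poch (p+a+1) j := by
      have h2 := gamma_poch (x := p+(a:ℝ)+1) (by positivity) j
      rw [show p+(a:ℝ)+1 + (j:ℝ) = p + j + a + 1 by ring] at h2
      have h3 := gamma_poch (x := p+(a:ℝ)+1) (by positivity) (n-a)
      rw [show p+(a:ℝ)+1 + ((n-a:ℕ):ℝ) = p + n + 1 by rw [Nat.cast_sub ha']; ring] at h3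
      rw [h2, h3]; ring
    have hfac : (((n-a).factorial : ℝ)) * (a.factorial : ℝ) * (n.choose a) = n.factorial := by
      rw [← Nat.choose_mul_factorial_mul_factorial ha']
      push_cast; ring
    have hpc : poch ((p+1) + (a:ℝ)) j = poch (p+(a:ℝ)+1) j := by
      rw [show (p+1) + (a:ℝ) = p+(a:ℝ)+1 by ring]
    rw [hpc]
    have e1 : ((-1:ℝ)^a * poch (p+a+1) (n-a) / (((n-a).factorial:ℝ) * a.factorial))
        * Real.Gamma ((p + j + a) + 1)
        = (-1:ℝ)^a * (poch (p+a+1) (n-a) * Real.Gamma (p + j + a + 1))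
            / (((n-a).factorial:ℝ) * a.factorial) := by ring
    rw [e1, key]
    have hf1 : ((n-a).factorial : ℝ) ≠ 0 := Nat.cast_ne_zero.mpr (Nat.factorial_ne_zero _)
    have hf2 : (a.factorial : ℝ) ≠ 0 := Nat.cast_ne_zero.mpr (Nat.factorial_ne_zero _)
    have hf3 : (n.factorial : ℝ) ≠ 0 := Nat.cast_ne_zero.mpr (Nat.factorial_ne_zero _)
    field_simp
    linear_combination (-poch (p+(a:ℝ)+1) j) * hfac
  rw [Finset.sum_congr rfl h1, ← Finset.mul_sum, poch_findiff (p+1) n j hj]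
  have hf3 : (n.factorial : ℝ) ≠ 0 := Nat.cast_ne_zero.mpr (Nat.factorial_ne_zero _)
  split_ifs with h
  · field_simp
  · simp

lemma lagprod_expand (p : ℝ) (m n : ℕ) (x : ℝ) :
    Real.exp (-x) * x ^ p * (lagP p m x * lagP p n x)
    = ∑ a ∈ Finset.range (m+1),
        ((-1:ℝ)^a * poch (p+a+1) (m-a) / ((m-a).factorial * a.factorial))
          * (Real.exp (-x) * x ^ p * x ^ a * lagP p n x) := by
  conv_lhs => rw [lagP]
  rw [Finset.sum_mul, Finset.mul_sum]
  apply Finset.sum_congr rfl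
  intro a _
  ring

lemma lagprod_int (p : ℝ) (hp : 0 < p) (m n : ℕ) :
    IntegrableOn (fun x => Real.exp (-x) * x ^ p * (lagP p m x * lagP p n x)) (Set.Ioi (0:ℝ)) := by
  have hsum : IntegrableOn (fun x => ∑ a ∈ Finset.range (m+1),
      ((-1:ℝ)^a * poch (p+a+1) (m-a) / ((m-a).factorial * a.factorial))
        * (Real.exp (-x) * x ^ p * x ^ a * lagP p n x)) (Set.Ioi (0:ℝ)) :=
    MeasureTheory.integrable_finset_sum _ (fun a _ => (lagmono_int p hp n a).const_mul _)
  exact hsum.congr_fun (fun x _ => (lagprod_expand p m n x).symm) measurableSet_Ioi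

lemma lag_orth_le (p : ℝ) (hp : 0 < p) (m n : ℕ) (hmn : m ≤ n) :
    ∫ x in Set.Ioi (0:ℝ), Real.exp (-x) * x ^ p * (lagP p m x * lagP p n x)
    = if m = n then Real.Gamma (p+n+1) / n.factorial else 0 := by
  rw [MeasureTheory.setIntegral_congr_fun measurableSet_Ioi (fun x _ => lagprod_expand p m n x)]
  rw [MeasureTheory.integral_finset_sum (Finset.range (m+1))
      (f := fun (a:ℕ) (x:ℝ) => ((-1:ℝ)^a * poch (p+a+1) (m-a) / ((m-a).factorial * a.factorial))
        * (Real.exp (-x) * x ^ p * x ^ a * lagP p n x))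
      (fun a _ => (lagmono_int p hp n a).const_mul _)]
  have h1 : ∀ a ∈ Finset.range (m+1),
      (∫ x in Set.Ioi (0:ℝ), ((-1:ℝ)^a * poch (p+a+1) (m-a) / ((m-a).factorial * a.factorial))
        * (Real.exp (-x) * x ^ p * x ^ a * lagP p n x))
      = ((-1:ℝ)^a * poch (p+a+1) (m-a) / ((m-a).factorial * a.factorial))
        * (if a = n then (-1:ℝ)^n * Real.Gamma (p+n+1) else 0) := by
    intro a ha
    have ha' : a ≤ n := le_trans (Nat.lt_succ_iff.mp (Finset.mem_range.mp ha)) hmn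
    rw [MeasureTheory.integral_const_mul, lag_moment p hp n a ha']
  rw [Finset.sum_congr rfl h1]
  by_cases h : m = n
  · subst h
    rw [if_pos rfl]
    simp only [mul_ite, mul_zero, Finset.sum_ite_eq' (Finset.range (m+1))]
    rw [if_pos (Finset.self_mem_range_succ m)]
    have h0 : m - m = 0 := Nat.sub_self m
    rw [h0]
    simp only [poch, Finset.range_zero, Finset.prod_empty, Nat.factorial_zero]
    have hf : ((m.factorial : ℝ)) ≠ 0 := Nat.cast_ne_zero.mpr (Nat.factorial_ne_zero _)
    have hsq : ((-1:ℝ)^m) * ((-1:ℝ)^m) = 1 := by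
      rw [← pow_add]
      exact Even.neg_one_pow ⟨m, rfl⟩
    field_simp
    linear_combination hsq
  · rw [if_neg h]
    apply Finset.sum_eq_zero
    intro a ha
    have : a ≠ n := by
      have := Finset.mem_range.mp ha
      omega
    rw [if_neg this, mul_zero]

lemma lag_orth (p : ℝ) (hp : 0 < p) (m n : ℕ) :
    ∫ x in Set.Ioi (0:ℝ), Real.exp (-x) * x ^ p * (lagP p m x * lagP p n x)
    = if m = n then Real.Gamma (p+n+1) / n.factorial else 0 := by
  rcases le_total m n with h | h
  · exact lag_orth_le p hp m n h
  · have h2 := lag_orth_le p hp n m h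
    have h3 : ∀ x : ℝ, Real.exp (-x) * x ^ p * (lagP p n x * lagP p m x)
        = Real.exp (-x) * x ^ p * (lagP p m x * lagP p n x) := by intro x; ring
    simp only [h3] at h2
    rw [h2]
    by_cases hmn : m = n
    · subst hmn; simp
    · rw [if_neg (fun hh => hmn hh.symm), if_neg hmn]

lemma poch_neg_fac (j k : ℕ) (hk : k ≤ j) :
    (-1:ℝ)^k * poch (-(j:ℝ)) k * (j-k).factorial = j.factorial := by
  induction k with
  | zero => simp [poch]
  | succ k ih =>
    have hk' : k ≤ j := by omega
    rw [poch, Finset.prod_range_succ, ← poch]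
    rw [show -(j:ℝ) + (k:ℝ) = -(((j-k:ℕ)):ℝ) by rw [Nat.cast_sub hk']; ring]
    have h4 : (j - (k+1)) + 1 = j - k := by omega
    have h3 : ((j - k).factorial : ℝ) = ((j-k:ℕ):ℝ) * ((j - (k+1)).factorial : ℝ) := by
      calc ((j-k).factorial : ℝ) = (((j-(k+1)) + 1).factorial : ℝ) := by rw [h4]
        _ = (((j-(k+1)) + 1 : ℕ) : ℝ) * ((j-(k+1)).factorial : ℝ) := by
            rw [Nat.factorial_succ]; push_cast; ring
        _ = ((j-k:ℕ):ℝ) * ((j-(k+1)).factorial : ℝ) := by rw [h4]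
    linear_combination ih hk' - ((-1:ℝ)^k * poch (-(j:ℝ)) k) * h3

lemma poch_neg (j k : ℕ) (hk : k ≤ j) :
    (-1:ℝ)^k * poch (-(j:ℝ)) k = (j.factorial : ℝ) / ((j-k).factorial : ℝ) := by
  have h := poch_neg_fac j k hk
  have hf : (((j-k).factorial : ℝ)) ≠ 0 := Nat.cast_ne_zero.mpr (Nat.factorial_ne_zero _)
  field_simp
  linarith [h]

lemma Wmat_apply (N : ℕ) (μ δ : Fin N → ℝ) (α ν x : ℝ) (i j : Fin N) :
    Wmat N μ δ α ν x i j = ∑ k : Fin N,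
      LagMat N μ α x i k * (Real.exp (-x) * δ k * x ^ (ν + (k:ℕ) + 1)) * LagMat N μ α x j k := by
  simp only [Wmat, Tmat, Matrix.mul_apply, Matrix.transpose_apply, Matrix.diagonal_apply,
    mul_ite, mul_zero, ite_mul, zero_mul, Finset.sum_ite_eq', Finset.mem_univ, if_true]

/-- the 0-th moment for `α = ν` is diagonal, with explicit diagonal entries. -/
theorem zeroth_moment (N : ℕ) (hN : 1 ≤ N) (μ : Fin N → ℝ) (hμ : ∀ k, μ k ≠ 0)
    (ν : ℝ) (hν : 0 < ν) (δ : Fin N → ℝ) (hδ : ∀ k, 0 < δ k) :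
    (∀ i j : Fin N, i ≠ j → (∫ x in Set.Ioi (0 : ℝ), Wmat N μ δ ν ν x i j) = 0) ∧
    ∀ j : Fin N, (∫ x in Set.Ioi (0 : ℝ), Wmat N μ δ ν ν x j j) =
      μ j ^ 2 * Real.Gamma (ν + (j : ℕ) + 2) / (j : ℕ).factorial *
        ∑ k ∈ Finset.Iic j,
          δ k / μ k ^ 2 * (-1 : ℝ) ^ (k : ℕ) * poch (-((j : ℕ) : ℝ)) (k : ℕ) := by
  have hp : ∀ k : Fin N, (0:ℝ) < ν + (k:ℕ) + 1 := by intro k; positivity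
  have hterm : ∀ (i j k : Fin N) (x : ℝ),
      LagMat N μ ν x i k * (Real.exp (-x) * δ k * x ^ (ν + (k:ℕ) + 1)) * LagMat N μ ν x j k
      = if (k:ℕ) ≤ (i:ℕ) ∧ (k:ℕ) ≤ (j:ℕ) then
          (μ i * μ j / μ k ^ 2 * δ k) *
            (Real.exp (-x) * x ^ (ν + (k:ℕ) + 1) *
              (lagP (ν + (k:ℕ) + 1) ((i:ℕ)-(k:ℕ)) x * lagP (ν + (k:ℕ) + 1) ((j:ℕ)-(k:ℕ)) x))
        else 0 := by
    intro i j k x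
    simp only [LagMat, Matrix.of_apply]
    by_cases h1 : (k:ℕ) ≤ (i:ℕ)
    · by_cases h2 : (k:ℕ) ≤ (j:ℕ)
      · rw [if_pos h1, if_pos h2, if_pos ⟨h1, h2⟩]
        have hμk := hμ k
        field_simp
      · rw [if_neg h2, if_neg (fun hc : (k:ℕ) ≤ (i:ℕ) ∧ (k:ℕ) ≤ (j:ℕ) => h2 hc.2), mul_zero]
    · rw [if_neg h1, if_neg (fun hc : (k:ℕ) ≤ (i:ℕ) ∧ (k:ℕ) ≤ (j:ℕ) => h1 hc.1), zero_mul, zero_mul]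
  have hintg : ∀ i j : Fin N,
      (∫ x in Set.Ioi (0:ℝ), Wmat N μ δ ν ν x i j)
      = ∑ k : Fin N, (if (k:ℕ) ≤ (i:ℕ) ∧ (k:ℕ) ≤ (j:ℕ) then
          (μ i * μ j / μ k ^ 2 * δ k) *
            (if (i:ℕ)-(k:ℕ) = (j:ℕ)-(k:ℕ) then
              Real.Gamma ((ν + (k:ℕ) + 1) + ((((j:ℕ)-(k:ℕ) : ℕ)) : ℝ) + 1) / ((j:ℕ)-(k:ℕ)).factorial
            else 0)
        else 0) := by
    intro i j
    have e : (fun x : ℝ => Wmat N μ δ ν ν x i j) = fun x => ∑ k : Fin N,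
        (if (k:ℕ) ≤ (i:ℕ) ∧ (k:ℕ) ≤ (j:ℕ) then
          (μ i * μ j / μ k ^ 2 * δ k) *
            (Real.exp (-x) * x ^ (ν + (k:ℕ) + 1) *
              (lagP (ν + (k:ℕ) + 1) ((i:ℕ)-(k:ℕ)) x * lagP (ν + (k:ℕ) + 1) ((j:ℕ)-(k:ℕ)) x))
        else 0) := by
      funext x
      rw [Wmat_apply]
      exact Finset.sum_congr rfl (fun k _ => hterm i j k x)
    rw [e]
    rw [MeasureTheory.integral_finset_sum Finset.univ
        (f := fun (k : Fin N) (x:ℝ) =>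
          (if (k:ℕ) ≤ (i:ℕ) ∧ (k:ℕ) ≤ (j:ℕ) then
            (μ i * μ j / μ k ^ 2 * δ k) *
              (Real.exp (-x) * x ^ (ν + (k:ℕ) + 1) *
                (lagP (ν + (k:ℕ) + 1) ((i:ℕ)-(k:ℕ)) x * lagP (ν + (k:ℕ) + 1) ((j:ℕ)-(k:ℕ)) x))
          else 0))
        (by
          intro k _
          by_cases h : (k:ℕ) ≤ (i:ℕ) ∧ (k:ℕ) ≤ (j:ℕ)
          · simp only [if_pos h]
            exact (lagprod_int (ν + (k:ℕ) + 1) (hp k) _ _).const_mul _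
          · simp only [if_neg h]
            exact MeasureTheory.integrable_zero _ _ _)]
    apply Finset.sum_congr rfl
    intro k _
    by_cases h : (k:ℕ) ≤ (i:ℕ) ∧ (k:ℕ) ≤ (j:ℕ)
    · simp only [if_pos h]
      rw [MeasureTheory.integral_const_mul,
        lag_orth (ν + (k:ℕ) + 1) (hp k) ((i:ℕ)-(k:ℕ)) ((j:ℕ)-(k:ℕ))]
    · simp only [if_neg h, MeasureTheory.integral_zero]
  constructor
  · intro i j hij
    rw [hintg i j]
    apply Finset.sum_eq_zero
    intro k _
    by_cases h : (k:ℕ) ≤ (i:ℕ) ∧ (k:ℕ) ≤ (j:ℕ)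
    · rw [if_pos h]
      have hne : ¬ ((i:ℕ)-(k:ℕ) = (j:ℕ)-(k:ℕ)) := by
        intro hh
        exact hij (Fin.ext (by omega))
      rw [if_neg hne, mul_zero]
    · rw [if_neg h]
  · intro j
    rw [hintg j j]
    have hIic : ∀ g : Fin N → ℝ, (∑ k ∈ Finset.Iic j, g k) = ∑ k : Fin N,
        (if (k:ℕ) ≤ (j:ℕ) then g k else 0) := by
      intro g
      have hs : Finset.Iic j = Finset.filter (fun k : Fin N => (k:ℕ) ≤ (j:ℕ)) Finset.univ := by
        ext k
        simp only [Finset.mem_Iic, Finset.mem_filter, Finset.mem_univ, true_and, Fin.le_def]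
      rw [hs, Finset.sum_filter]
    rw [hIic, Finset.mul_sum]
    apply Finset.sum_congr rfl
    intro k _
    by_cases hk : (k:ℕ) ≤ (j:ℕ)
    · rw [if_pos ⟨hk, hk⟩, if_pos rfl, if_pos hk]
      have hΓ : ν + ((k:ℕ):ℝ) + 1 + ((((j:ℕ)-(k:ℕ)):ℕ):ℝ) + 1 = ν + ((j:ℕ):ℝ) + 2 := by
        rw [Nat.cast_sub hk]; ring
      rw [hΓ]
      have hpn := poch_neg_fac (j:ℕ) (k:ℕ) hk
      have hf1 : ((((j:ℕ)-(k:ℕ)).factorial : ℕ) : ℝ) ≠ 0 := Nat.cast_ne_zero.mpr (Nat.factorial_ne_zero _)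
      have hf2 : (((j:ℕ).factorial : ℕ) : ℝ) ≠ 0 := Nat.cast_ne_zero.mpr (Nat.factorial_ne_zero _)
      have hμk := hμ k
      field_simp
      linear_combination (-(μ j ^ 2 * δ k)) * hpn
    · rw [if_neg (by tauto), if_neg hk, mul_zero]
end
end
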